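/- arXiv:math/0703707 — 4 statements merged into one kernel-verified Lean document; each statement's English description precedes it below -/
import Mathlib

section
/- Let p be an odd prime, d ≥ 2 with d ∣ p−1, f = (p−1)/d, and let a ∈ 𝔽_p^* with α ≡ ind_ω(a) mod d. Then in the ring of formal power series ℂ[[T]] one has the identity Σ_{k=0}^{∞} N(k,a)·T^k = (1/p)·[ 1/(1−fT) + Σ_{i=0}^{d−1} η_{i+α+θ}/(1 − η_i T) ], where N(0,a) = 0 and each 1/(1−cT) denotes the inverse of the polynomial 1−cT in ℂ[[T]]; consequently s_d(p,a) equals the T-adic order of the right-hand side. -/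
open Finset

/-- The Gauss period `η_i = Σ_{u=0}^{f-1} ζ^{ω^{du+i}}`. -/
noncomputable def gaussPeriod (p d f : ℕ) (ω : (ZMod p)ˣ) (ζ : ℂ) (i : ℕ) : ℂ :=
  ∑ u ∈ Finset.range f, ζ ^ (((ω : ZMod p) ^ (d * u + i)).val)

/-- The cyclotomic number `(i,j)` of order `d`. -/
noncomputable def cycNum (p d f : ℕ) (ω : (ZMod p)ˣ) (i j : ℕ) : ℕ :=
  Nat.card {uv : ℕ × ℕ // uv.1 < f ∧ uv.2 < f ∧
    (1 : ZMod p) + (ω : ZMod p) ^ (d * uv.1 + i) = (ω : ZMod p) ^ (d * uv.2 + j)}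

/-- The cyclotomic integer `n(k,ν) = Σ_{i=0}^{d-1} η_i^k · η_{i+ν}`. -/
noncomputable def nInt (p d f : ℕ) (ω : (ZMod p)ˣ) (ζ : ℂ) (k ν : ℕ) : ℂ :=
  ∑ i ∈ Finset.range d, (gaussPeriod p d f ω ζ i) ^ k * gaussPeriod p d f ω ζ (i + ν)

/-- `θ = 0` if `f` is even, `θ = d/2` if `f` is odd. -/
def theta (d f : ℕ) : ℕ := if Even f then 0 else d / 2

/-- `N(k,a)`: the number of `k`-tuples of nonzero `d`-th powers summing to `a`. -/
noncomputable def waringCount (p d k : ℕ) (a : ZMod p) : ℕ :=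
  Nat.card {t : Fin k → ZMod p //
    (∀ i, ∃ b : (ZMod p)ˣ, ((b : ZMod p)) ^ d = t i) ∧ ∑ i, t i = a}

/-- `s_d(p,a)`: the least `k ≥ 1` such that `a` is a sum of `k` nonzero `d`-th powers. -/
noncomputable def sWaring (p d : ℕ) (a : ZMod p) : ℕ :=
  sInf {k | 1 ≤ k ∧ ∃ u : Fin k → (ZMod p)ˣ, a = ∑ i, ((u i : ZMod p)) ^ d}

/-- `g_d(p) = max_{a ∈ 𝔽_p^*} s_d(p,a)`. -/
noncomputable def gWaring (p d : ℕ) : ℕ :=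
  sSup {s | ∃ a : (ZMod p)ˣ, s = sWaring p d (a : ZMod p)}

/-- Product of a chain of cyclotomic numbers `(a,x₁)(x₁,x₂)⋯(xₘ,b)`. -/
noncomputable def chainProd (c : ℕ → ℕ → ℕ) (a b : ℕ) : List ℕ → ℕ
  | [] => c a b
  | x :: xs => c a x * chainProd c x b xs

/-- Sum over all chains of `m` intermediate indices `0 ≤ i < d` of the products
`(a,i₂)(i₂,i₃)⋯(i_{m+1},b)` of consecutive cyclotomic numbers. -/
noncomputable def chainSum (d : ℕ) (c : ℕ → ℕ → ℕ) (a b m : ℕ) : ℕ :=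
  ∑ v : Fin m → Fin d, chainProd c a b (List.ofFn fun i => ((v i : ℕ)))

namespace WaringGF

/-! ### Root-of-unity basics -/

lemma zeta_pow_mod {ζ : ℂ} {p : ℕ} (hζ1 : ζ ^ p = 1) (n : ℕ) : ζ ^ (n % p) = ζ ^ n := by
  conv_rhs => rw [← Nat.div_add_mod n p]
  rw [pow_add, pow_mul, hζ1, one_pow, one_mul]

lemma eF_add {ζ : ℂ} {p : ℕ} [NeZero p] (hζ1 : ζ ^ p = 1) (x y : ZMod p) :
    ζ ^ (x + y).val = ζ ^ x.val * ζ ^ y.val := by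
  rw [ZMod.val_add, zeta_pow_mod hζ1, pow_add]

lemma eF_zero {ζ : ℂ} {p : ℕ} [NeZero p] : ζ ^ (0 : ZMod p).val = 1 := by
  rw [ZMod.val_zero, pow_zero]

lemma eF_sum {ζ : ℂ} {p : ℕ} [NeZero p] (hζ1 : ζ ^ p = 1) {ι : Type*} (s : Finset ι)
    (g : ι → ZMod p) :
    ζ ^ (∑ i ∈ s, g i).val = ∏ i ∈ s, ζ ^ (g i).val := by
  classical
  induction s using Finset.cons_induction with
  | empty => simpa using eF_zero (ζ := ζ) (p := p)
  | cons a s ha ih => rw [Finset.sum_cons, Finset.prod_cons, eF_add hζ1, ih]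

lemma sum_eF_eq_zero {ζ : ℂ} {p : ℕ} [Fact p.Prime] (hζ : IsPrimitiveRoot ζ p) :
    ∑ t : ZMod p, ζ ^ t.val = 0 := by
  have hp : p.Prime := Fact.out
  have h1 : ∑ t : ZMod p, ζ ^ t.val = ∑ n ∈ Finset.range p, ζ ^ n := by
    refine Finset.sum_nbij' (fun t => t.val) (fun n => (n : ZMod p)) ?_ ?_ ?_ ?_ ?_
    · intro t _; exact Finset.mem_range.2 (ZMod.val_lt t)
    · intro n _; exact Finset.mem_univ _
    · intro t _; exact ZMod.natCast_rightInverse t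
    · intro n hn; exact ZMod.val_cast_of_lt (Finset.mem_range.1 hn)
    · intro t _; rfl
  rw [h1, hζ.geom_sum_eq_zero hp.one_lt]

lemma ortho {ζ : ℂ} {p : ℕ} [Fact p.Prime] (hζ : IsPrimitiveRoot ζ p) (c : ZMod p) :
    ∑ t : ZMod p, ζ ^ (t * c).val = if c = 0 then (p : ℂ) else 0 := by
  split_ifs with hc
  · subst hc
    simp only [mul_zero, ZMod.val_zero, pow_zero]
    rw [Finset.sum_const, Finset.card_univ, ZMod.card, nsmul_eq_mul, mul_one]
  · have hbij : ∑ t : ZMod p, ζ ^ (t * c).val = ∑ t : ZMod p, ζ ^ t.val :=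
      Fintype.sum_equiv (Equiv.mulRight₀ c hc) _ _ (fun t => rfl)
    rw [hbij, sum_eF_eq_zero hζ]


/-! ### omega-power lemmas -/

section Omega

variable {p d f : ℕ} [Fact p.Prime] {ω : (ZMod p)ˣ} {ζ : ℂ}

lemma omega_pow_mod (n : ℕ) : (ω : ZMod p) ^ n = (ω : ZMod p) ^ (n % (p - 1)) := by
  have h : ω ^ n = ω ^ (n % (p - 1)) := by
    conv_lhs => rw [← Nat.div_add_mod n (p - 1)]
    rw [pow_add, pow_mul, ZMod.units_pow_card_sub_one_eq_one, one_pow, one_mul]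
  exact_mod_cast congrArg (Units.val) h

lemma omega_pow_congr {m n : ℕ} (h : m ≡ n [MOD p - 1]) :
    (ω : ZMod p) ^ m = (ω : ZMod p) ^ n := by
  rw [omega_pow_mod m, omega_pow_mod n, h]

lemma orderOf_omega (hω : ∀ x : (ZMod p)ˣ, ∃ n : ℕ, ω ^ n = x) : orderOf ω = p - 1 := by
  have := orderOf_eq_card_of_forall_mem_zpowers
    (fun x => by
      obtain ⟨n, hn⟩ := hω x
      exact ⟨(n : ℤ), by show ω ^ (n : ℤ) = x; rw [zpow_natCast, hn]⟩)
  rw [this, Nat.card_eq_fintype_card, ZMod.card_units]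

lemma omega_pow_inj (hω : ∀ x : (ZMod p)ˣ, ∃ n : ℕ, ω ^ n = x)
    {m n : ℕ} (hm : m < p - 1) (hn : n < p - 1)
    (h : (ω : ZMod p) ^ m = (ω : ZMod p) ^ n) : m = n := by
  have h' : ω ^ m = ω ^ n := Units.ext (by push_cast; exact h)
  have ho := orderOf_omega hω
  exact pow_injOn_Iio_orderOf (by simpa [ho] using hm) (by simpa [ho] using hn) h'

end Omega

/-! ### Gauss period basic lemmas -/

section Gauss

variable {p d f : ℕ} [Fact p.Prime] {ω : (ZMod p)ˣ} {ζ : ℂ}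

lemma gaussPeriod_eq_zmod (hdf : p - 1 = d * f) [NeZero f] (i : ℕ) :
    gaussPeriod p d f ω ζ i = ∑ v : ZMod f, ζ ^ (((ω : ZMod p) ^ (d * v.val + i)).val) := by
  unfold gaussPeriod
  refine Finset.sum_nbij' (fun u => (u : ZMod f)) (fun v => v.val) ?_ ?_ ?_ ?_ ?_
  · intro u _; exact Finset.mem_univ _
  · intro v _; exact Finset.mem_range.2 (ZMod.val_lt v)
  · intro u hu; exact ZMod.val_cast_of_lt (Finset.mem_range.1 hu)
  · intro v _; exact ZMod.natCast_rightInverse v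
  · intro u hu; rw [ZMod.val_cast_of_lt (Finset.mem_range.1 hu)]

lemma omega_pow_congr_f (hdf : p - 1 = d * f) {w w' : ℕ} (h : w ≡ w' [MOD f]) (i : ℕ) :
    (ω : ZMod p) ^ (d * w + i) = (ω : ZMod p) ^ (d * w' + i) := by
  refine omega_pow_congr ?_
  rw [hdf]
  exact (Nat.ModEq.mul_left' d h).add_right i

lemma gaussPeriod_add_d (hdf : p - 1 = d * f) [NeZero f] (i : ℕ) :
    gaussPeriod p d f ω ζ (i + d) = gaussPeriod p d f ω ζ i := by
  rw [gaussPeriod_eq_zmod hdf, gaussPeriod_eq_zmod hdf]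
  have step : ∀ v : ZMod f, (ω : ZMod p) ^ (d * v.val + (i + d)) =
      (ω : ZMod p) ^ (d * (v + 1).val + i) := by
    intro v
    have h1 : d * v.val + (i + d) = d * (v.val + 1) + i := by ring
    rw [h1]
    refine omega_pow_congr_f hdf ?_ i
    have : (v + 1).val = (v.val + (1 : ZMod f).val) % f := ZMod.val_add v 1
    have h2 : (1 : ZMod f).val ≡ 1 [MOD f] := by
      rw [ZMod.val_one_eq_one_mod]
      exact Nat.mod_modEq 1 f
    calc v.val + 1 ≡ v.val + (1 : ZMod f).val [MOD f] := (Nat.ModEq.add_left _ h2).symm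
      _ ≡ (v + 1).val [MOD f] := by rw [this]; exact (Nat.mod_modEq _ f).symm
  calc ∑ v : ZMod f, ζ ^ (((ω : ZMod p) ^ (d * v.val + (i + d))).val)
      = ∑ v : ZMod f, ζ ^ (((ω : ZMod p) ^ (d * (v + 1).val + i)).val) := by
        exact Finset.sum_congr rfl fun v _ => by rw [step v]
    _ = ∑ v : ZMod f, ζ ^ (((ω : ZMod p) ^ (d * v.val + i)).val) :=
        Fintype.sum_equiv (Equiv.addRight (1 : ZMod f)) _ _ (fun v => rfl)

lemma gaussPeriod_add_mul_d (hdf : p - 1 = d * f) [NeZero f] (i m : ℕ) :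
    gaussPeriod p d f ω ζ (i + d * m) = gaussPeriod p d f ω ζ i := by
  induction m with
  | zero => rw [mul_zero, add_zero]
  | succ m ih =>
      have : i + d * (m + 1) = (i + d * m) + d := by ring
      rw [this, gaussPeriod_add_d hdf, ih]

lemma gaussPeriod_congr (hdf : p - 1 = d * f) [NeZero f] {i j : ℕ} (hij : i ≡ j [MOD d]) :
    gaussPeriod p d f ω ζ i = gaussPeriod p d f ω ζ j := by
  rcases le_total i j with h | h
  · obtain ⟨m, hm⟩ := (Nat.modEq_iff_dvd' h).1 hij
    have : j = i + d * m := by omega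
    rw [this, gaussPeriod_add_mul_d hdf]
  · obtain ⟨m, hm⟩ := (Nat.modEq_iff_dvd' h).1 hij.symm
    have : i = j + d * m := by omega
    rw [this, gaussPeriod_add_mul_d hdf]

lemma S_omega (j : ℕ) :
    ∑ u ∈ Finset.range f, ζ ^ (((ω : ZMod p) ^ j * (ω : ZMod p) ^ (d * u)).val)
      = gaussPeriod p d f ω ζ j := by
  unfold gaussPeriod
  refine Finset.sum_congr rfl fun u _ => ?_
  rw [← pow_add, add_comm j (d * u)]

end Gauss

/-! ### Reindexing sums -/

section Reindex

variable {p : ℕ} [Fact p.Prime] {ω : (ZMod p)ˣ}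

lemma sum_erase_zero_eq_range (hω : ∀ x : (ZMod p)ˣ, ∃ n : ℕ, ω ^ n = x)
    (g : ZMod p → ℂ) :
    ∑ t ∈ Finset.univ.erase (0 : ZMod p), g t
      = ∑ j ∈ Finset.range (p - 1), g ((ω : ZMod p) ^ j) := by
  have hp : p.Prime := Fact.out
  have hp1 : 0 < p - 1 := by have := hp.two_le; omega
  symm
  refine Finset.sum_bij (fun j _ => (ω : ZMod p) ^ j) ?_ ?_ ?_ ?_
  · intro j _
    exact Finset.mem_erase.2 ⟨pow_ne_zero _ ω.ne_zero, Finset.mem_univ _⟩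
  · intro j₁ h₁ j₂ h₂ h
    exact omega_pow_inj hω (Finset.mem_range.1 h₁) (Finset.mem_range.1 h₂) h
  · intro x hx
    have hx0 : x ≠ 0 := (Finset.mem_erase.1 hx).1
    obtain ⟨n, hn⟩ := hω (Units.mk0 x hx0)
    refine ⟨n % (p - 1), Finset.mem_range.2 (Nat.mod_lt _ hp1), ?_⟩
    show (ω : ZMod p) ^ (n % (p - 1)) = x
    rw [← omega_pow_mod]
    have : ((ω ^ n : (ZMod p)ˣ) : ZMod p) = x := by rw [hn]; rfl
    simpa using this
  · intro j _; rfl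

lemma sum_range_mul_decomp {d f : ℕ} (hd0 : 0 < d) (h : ℕ → ℂ) :
    ∑ j ∈ Finset.range (d * f), h j
      = ∑ i ∈ Finset.range d, ∑ u ∈ Finset.range f, h (d * u + i) := by
  have hprod : ∑ i ∈ Finset.range d, ∑ u ∈ Finset.range f, h (d * u + i)
      = ∑ x ∈ Finset.range d ×ˢ Finset.range f, h (d * x.2 + x.1) :=
    (Finset.sum_product (s := Finset.range d) (t := Finset.range f)
      (f := fun x => h (d * x.2 + x.1))).symm
  rw [hprod]
  refine Finset.sum_nbij' (fun j => (j % d, j / d)) (fun x => d * x.2 + x.1) ?_ ?_ ?_ ?_ ?_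
  · intro j hj
    have hj' := Finset.mem_range.1 hj
    refine Finset.mem_product.2 ⟨Finset.mem_range.2 (Nat.mod_lt _ hd0),
      Finset.mem_range.2 ?_⟩
    exact Nat.div_lt_of_lt_mul (by omega)
  · intro x hx
    obtain ⟨h1, h2⟩ := Finset.mem_product.1 hx
    refine Finset.mem_range.2 ?_
    have h1' := Finset.mem_range.1 h1
    have h2' := Finset.mem_range.1 h2
    calc d * x.2 + x.1 < d * x.2 + d := by omega
      _ = d * (x.2 + 1) := by ring
      _ ≤ d * f := Nat.mul_le_mul_left d (by omega)
  · intro j _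
    show d * (j / d) + j % d = j
    exact Nat.div_add_mod j d
  · intro x hx
    obtain ⟨h1, h2⟩ := Finset.mem_product.1 hx
    have h1' := Finset.mem_range.1 h1
    have : (d * x.2 + x.1) % d = x.1 := by
      rw [Nat.mul_add_mod]; exact Nat.mod_eq_of_lt h1'
    have hdiv : (d * x.2 + x.1) / d = x.2 := by
      rw [Nat.mul_add_div hd0, Nat.div_eq_of_lt h1', add_zero]
    show ((d * x.2 + x.1) % d, (d * x.2 + x.1) / d) = x
    rw [this, hdiv]
  · intro j _
    show h j = h (d * (j / d) + j % d)
    rw [Nat.div_add_mod j d]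

end Reindex

/-! ### The counting lemma -/

section Count

variable {p d f : ℕ} [Fact p.Prime] {ω : (ZMod p)ˣ}

lemma count_eq (hd0 : 0 < d) (hdf : p - 1 = d * f)
    (hω : ∀ x : (ZMod p)ˣ, ∃ n : ℕ, ω ^ n = x) (k : ℕ) (a : ZMod p) :
    ((Fintype.piFinset fun _ : Fin k => Finset.range f).filter
        (fun v => ∑ i, (ω : ZMod p) ^ (d * v i) = a)).card = waringCount p d k a := by
  classical
  have hp : p.Prime := Fact.out
  have hf0 : 0 < f := by
    rcases Nat.eq_zero_or_pos f with h | h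
    · subst h
      rw [Nat.mul_zero] at hdf
      have := hp.two_le
      omega
    · exact h
  rw [waringCount, Nat.card_eq_fintype_card, Fintype.card_subtype]
  refine Finset.card_bij (fun v _ => fun i => (ω : ZMod p) ^ (d * v i)) ?_ ?_ ?_
  · intro v hv
    obtain ⟨hv1, hv2⟩ := Finset.mem_filter.1 hv
    refine Finset.mem_filter.2 ⟨Finset.mem_univ _, fun i => ⟨ω ^ v i, ?_⟩, by simpa using hv2⟩
    show ((ω ^ v i : (ZMod p)ˣ) : ZMod p) ^ d = (ω : ZMod p) ^ (d * v i)
    rw [Units.val_pow_eq_pow_val, ← pow_mul, mul_comm (v i) d]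
  · intro v₁ hv₁ v₂ hv₂ h
    obtain ⟨hv₁', _⟩ := Finset.mem_filter.1 hv₁
    obtain ⟨hv₂', _⟩ := Finset.mem_filter.1 hv₂
    have hm₁ := Fintype.mem_piFinset.1 hv₁'
    have hm₂ := Fintype.mem_piFinset.1 hv₂'
    funext i
    have hi : (ω : ZMod p) ^ (d * v₁ i) = (ω : ZMod p) ^ (d * v₂ i) := congrFun h i
    have h₁ : d * v₁ i < p - 1 := by
      rw [hdf]; exact mul_lt_mul_of_pos_left (Finset.mem_range.1 (hm₁ i)) hd0
    have h₂ : d * v₂ i < p - 1 := by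
      rw [hdf]; exact mul_lt_mul_of_pos_left (Finset.mem_range.1 (hm₂ i)) hd0
    exact Nat.eq_of_mul_eq_mul_left hd0 (omega_pow_inj hω h₁ h₂ hi)
  · intro t ht
    obtain ⟨-, h1, h2⟩ := Finset.mem_filter.1 ht
    choose b hb using h1
    choose n hn using fun i => hω (b i)
    have hval : ∀ i, (ω : ZMod p) ^ (d * (n i % f)) = t i := by
      intro i
      have e1 : (ω : ZMod p) ^ (d * (n i % f)) = (ω : ZMod p) ^ (d * n i) := by
        have := omega_pow_congr_f (ω := ω) hdf (Nat.mod_modEq (n i) f) 0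
        simpa using this
      rw [e1, mul_comm d (n i), pow_mul]
      have : ((ω : ZMod p)) ^ (n i) = ((b i : (ZMod p)ˣ) : ZMod p) := by
        rw [← hn i]; rfl
      rw [this]
      exact hb i
    refine ⟨fun i => n i % f, ?_, ?_⟩
    · refine Finset.mem_filter.2 ⟨Fintype.mem_piFinset.2 fun i =>
        Finset.mem_range.2 (Nat.mod_lt _ hf0), ?_⟩
      rw [← h2]
      exact Finset.sum_congr rfl fun i _ => hval i
    · funext i; exact hval i

end Count

/-! ### The key identity -/

section Key

variable {p d f : ℕ} [Fact p.Prime] {ω : (ZMod p)ˣ} {ζ : ℂ}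

lemma neg_one_eq_omega_pow (hodd : Odd p)
    (hω : ∀ x : (ZMod p)ˣ, ∃ n : ℕ, ω ^ n = x) :
    (-1 : ZMod p) = (ω : ZMod p) ^ ((p - 1) / 2) := by
  have hp : p.Prime := Fact.out
  have hp2 := hp.two_le
  have hpmod : p % 2 = 1 := Nat.odd_iff.1 hodd
  have h3 : 3 ≤ p := by omega
  have h2dvd : 2 ∣ p - 1 := by omega
  have hsq : ((ω : ZMod p) ^ ((p - 1) / 2)) ^ 2 = 1 := by
    rw [← pow_mul, Nat.div_mul_cancel h2dvd]
    have h := congrArg (Units.val) (ZMod.units_pow_card_sub_one_eq_one p ω)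
    rw [Units.val_pow_eq_pow_val] at h
    exact h
  have hne : (ω : ZMod p) ^ ((p - 1) / 2) ≠ 1 := by
    intro h
    have h' : ω ^ ((p - 1) / 2) = 1 := Units.ext (by push_cast; exact h)
    have := Nat.le_of_dvd (by omega) (orderOf_dvd_of_pow_eq_one h')
    rw [orderOf_omega hω] at this
    omega
  rcases sq_eq_one_iff.1 hsq with h | h
  · exact absurd h hne
  · exact h.symm

lemma theta_modEq (hodd : Odd p) (hdf : p - 1 = d * f) (m : ℕ) :
    d * m + (p - 1) / 2 ≡ theta d f [MOD d] := by
  have hp : p.Prime := Fact.out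
  have hp2 := hp.two_le
  have hpmod : p % 2 = 1 := Nat.odd_iff.1 hodd
  unfold theta
  split_ifs with hfe
  · obtain ⟨l, hl⟩ := hfe
    have h2 : (p - 1) / 2 = d * l := by
      have : p - 1 = 2 * (d * l) := by rw [hdf, hl]; ring
      omega
    rw [h2]
    have : d * m + d * l = d * (m + l) := by ring
    rw [this]
    exact (Nat.modEq_zero_iff_dvd).2 ⟨m + l, rfl⟩
  · have hde : Even d := by
      have hpe : Even (p - 1) := by
        refine Nat.even_sub' ?_ |>.2 ?_
        · omega
        · simp [Nat.odd_iff, hpmod]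
      rw [hdf] at hpe
      rcases Nat.even_mul.1 hpe with h | h
      · exact h
      · exact absurd h hfe
    obtain ⟨e, he⟩ := hde
    have hfo : f % 2 = 1 := by
      rcases Nat.even_or_odd f with h | h
      · exact absurd h hfe
      · exact Nat.odd_iff.1 h
    obtain ⟨l, hl⟩ : ∃ l, f = 2 * l + 1 := ⟨f / 2, by omega⟩
    have hd2 : d / 2 = e := by omega
    have h2 : (p - 1) / 2 = d * l + e := by
      have step1 : p - 1 = 2 * (d * l + e) := by rw [hdf, he, hl]; ring
      omega
    rw [h2, hd2]
    have : d * m + (d * l + e) = d * (m + l) + e := by ring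
    rw [this]
    have h0 : d * (m + l) ≡ 0 [MOD d] := (Nat.modEq_zero_iff_dvd).2 ⟨m + l, rfl⟩
    simpa using h0.add_right e

lemma key_identity (hodd : Odd p) (hd0 : 0 < d) (hdf : p - 1 = d * f)
    (hω : ∀ x : (ZMod p)ˣ, ∃ n : ℕ, ω ^ n = x) (hζ : IsPrimitiveRoot ζ p)
    (a : (ZMod p)ˣ) (α m : ℕ) (hα : (a : ZMod p) = (ω : ZMod p) ^ (α + d * m)) (k : ℕ) :
    (p : ℂ) * (waringCount p d k (a : ZMod p) : ℂ)
      = (f : ℂ) ^ k + ∑ i ∈ Finset.range d,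
          gaussPeriod p d f ω ζ (i + α + theta d f) * gaussPeriod p d f ω ζ i ^ k := by
  classical
  have hp : p.Prime := Fact.out
  have hζ1 : ζ ^ p = 1 := hζ.pow_eq_one
  have hf0 : 0 < f := by
    rcases Nat.eq_zero_or_pos f with h | h
    · subst h; rw [Nat.mul_zero] at hdf; have := hp.two_le; omega
    · exact h
  haveI : NeZero f := ⟨hf0.ne'⟩
  set c : ZMod p := -(a : ZMod p) with hc
  set T : ℂ := ∑ t : ZMod p,
      (∑ u ∈ Finset.range f, ζ ^ ((t * (ω : ZMod p) ^ (d * u)).val)) ^ k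
        * ζ ^ ((t * c).val) with hT
  have hB : T = (p : ℂ) * (waringCount p d k (a : ZMod p) : ℂ) := by
    have expand : ∀ t : ZMod p,
        (∑ u ∈ Finset.range f, ζ ^ ((t * (ω : ZMod p) ^ (d * u)).val)) ^ k
          = ∑ v ∈ Fintype.piFinset (fun _ : Fin k => Finset.range f),
              ζ ^ ((t * ∑ i, (ω : ZMod p) ^ (d * v i)).val) := by
      intro t
      rw [← Fin.prod_const, Finset.prod_univ_sum]
      refine Finset.sum_congr rfl fun v _ => ?_
      rw [Finset.mul_sum, eF_sum hζ1]
    calc T = ∑ t : ZMod p, ∑ v ∈ Fintype.piFinset (fun _ : Fin k => Finset.range f),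
            ζ ^ ((t * ∑ i, (ω : ZMod p) ^ (d * v i)).val) * ζ ^ ((t * c).val) := by
          rw [hT]
          exact Finset.sum_congr rfl fun t _ => by rw [expand t, Finset.sum_mul]
      _ = ∑ v ∈ Fintype.piFinset (fun _ : Fin k => Finset.range f), ∑ t : ZMod p,
            ζ ^ ((t * ((∑ i, (ω : ZMod p) ^ (d * v i)) + c)).val) := by
          rw [Finset.sum_comm]
          refine Finset.sum_congr rfl fun v _ => Finset.sum_congr rfl fun t _ => ?_
          rw [← eF_add hζ1, ← mul_add]
      _ = ∑ v ∈ Fintype.piFinset (fun _ : Fin k => Finset.range f),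
            (if (∑ i, (ω : ZMod p) ^ (d * v i)) = (a : ZMod p) then (p : ℂ) else 0) := by
          refine Finset.sum_congr rfl fun v _ => ?_
          rw [ortho hζ]
          congr 1
          rw [hc]
          exact propext add_neg_eq_zero
      _ = ((Fintype.piFinset fun _ : Fin k => Finset.range f).filter
            (fun v => ∑ i, (ω : ZMod p) ^ (d * v i) = (a : ZMod p))).card • (p : ℂ) := by
          rw [← Finset.sum_filter, Finset.sum_const]
      _ = (p : ℂ) * (waringCount p d k (a : ZMod p) : ℂ) := by
          rw [count_eq hd0 hdf hω, nsmul_eq_mul, mul_comm]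
  have hA : T = (f : ℂ) ^ k + ∑ i ∈ Finset.range d,
      gaussPeriod p d f ω ζ (i + α + theta d f) * gaussPeriod p d f ω ζ i ^ k := by
    rw [hT, ← Finset.add_sum_erase _ _ (Finset.mem_univ (0 : ZMod p))]
    congr 1
    · simp only [zero_mul, ZMod.val_zero, pow_zero, Finset.sum_const, Finset.card_range,
        nsmul_eq_mul, mul_one]
    · rw [sum_erase_zero_eq_range hω, hdf, sum_range_mul_decomp hd0]
      refine Finset.sum_congr rfl fun i _ => ?_
      have hca : c = (ω : ZMod p) ^ (α + d * m + (p - 1) / 2) := by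
        rw [hc, hα, ← neg_one_mul, neg_one_eq_omega_pow hodd hω, ← pow_add,
          add_comm ((p - 1) / 2) (α + d * m)]
      have hS : ∀ u : ℕ,
          (∑ u' ∈ Finset.range f, ζ ^ (((ω : ZMod p) ^ (d * u + i) * (ω : ZMod p) ^ (d * u')).val))
            = gaussPeriod p d f ω ζ i := by
        intro u
        rw [S_omega]
        exact gaussPeriod_congr hdf (Nat.mul_add_mod d u i)
      have hterm : ∀ u : ℕ, (ω : ZMod p) ^ (d * u + i) * c
          = (ω : ZMod p) ^ (d * u + (i + (α + d * m + (p - 1) / 2))) := by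
        intro u
        rw [hca, ← pow_add]
        congr 1
        omega
      calc ∑ u ∈ Finset.range f,
            (∑ u' ∈ Finset.range f,
              ζ ^ (((ω : ZMod p) ^ (d * u + i) * (ω : ZMod p) ^ (d * u')).val)) ^ k
              * ζ ^ (((ω : ZMod p) ^ (d * u + i) * c).val)
          = ∑ u ∈ Finset.range f, gaussPeriod p d f ω ζ i ^ k
              * ζ ^ (((ω : ZMod p) ^ (d * u + (i + (α + d * m + (p - 1) / 2)))).val) := by
            refine Finset.sum_congr rfl fun u _ => ?_
            rw [hS u, hterm u]
        _ = gaussPeriod p d f ω ζ i ^ k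
              * gaussPeriod p d f ω ζ (i + (α + d * m + (p - 1) / 2)) := by
            rw [← Finset.mul_sum]; rfl
        _ = gaussPeriod p d f ω ζ (i + α + theta d f) * gaussPeriod p d f ω ζ i ^ k := by
            rw [mul_comm]
            congr 1
            refine gaussPeriod_congr hdf ?_
            have h1 : i + (α + d * m + (p - 1) / 2) = (i + α) + (d * m + (p - 1) / 2) := by omega
            have h2 : i + α + theta d f = (i + α) + theta d f := rfl
            rw [h1, h2]
            exact (theta_modEq hodd hdf m).add_left (i + α)
  rw [← hB, hA]

end Key

/-! ### Power series geometric inverse -/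

open PowerSeries in
lemma geom_inv (c : ℂ) :
    (1 - C (R := ℂ) c * X)⁻¹ = PowerSeries.mk fun k => c ^ k := by
  have hconst : constantCoeff (R := ℂ) (1 - C (R := ℂ) c * X) ≠ 0 := by
    simp
  symm
  rw [PowerSeries.eq_inv_iff_mul_eq_one hconst]
  have hre : (PowerSeries.mk fun k => (c : ℂ) ^ k) * (C (R := ℂ) c * X)
      = (C (R := ℂ) c * PowerSeries.mk fun k => c ^ k) * X := by ring
  ext n
  rw [mul_sub, mul_one, map_sub, hre]
  cases n with
  | zero =>
      rw [PowerSeries.coeff_zero_mul_X, PowerSeries.coeff_mk]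
      simp
  | succ n =>
      rw [PowerSeries.coeff_succ_mul_X, PowerSeries.coeff_C_mul, PowerSeries.coeff_mk,
        PowerSeries.coeff_mk, PowerSeries.coeff_one]
      simp [pow_succ, mul_comm]

/-! ### waringCount basic lemmas -/

section Waring

variable {p d : ℕ} [Fact p.Prime]

lemma waringCount_zero {a : ZMod p} (ha : a ≠ 0) : waringCount p d 0 a = 0 := by
  rw [waringCount, Nat.card_eq_zero]
  left
  refine ⟨fun x => ?_⟩
  obtain ⟨t, -, h2⟩ := x
  simp only [Finset.univ_eq_empty, Finset.sum_empty] at h2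
  exact ha h2.symm

lemma waring_ne_zero_iff (k : ℕ) (a : ZMod p) :
    waringCount p d k a ≠ 0
      ↔ ∃ u : Fin k → (ZMod p)ˣ, a = ∑ i, ((u i : ZMod p)) ^ d := by
  haveI : NeZero p := ⟨(Fact.out : p.Prime).ne_zero⟩
  rw [waringCount, Nat.card_ne_zero]
  constructor
  · rintro ⟨⟨⟨t, h1, h2⟩⟩, -⟩
    choose b hb using h1
    exact ⟨b, by rw [← h2]; exact Finset.sum_congr rfl fun i _ => (hb i).symm⟩
  · rintro ⟨u, hu⟩
    exact ⟨⟨⟨fun i => ((u i : ZMod p)) ^ d, fun i => ⟨u i, rfl⟩, hu.symm⟩⟩, inferInstance⟩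

lemma sWaring_set_nonempty (a : (ZMod p)ˣ) :
    {k | 1 ≤ k ∧ ∃ u : Fin k → (ZMod p)ˣ, (a : ZMod p) = ∑ i, ((u i : ZMod p)) ^ d}.Nonempty := by
  haveI : NeZero p := ⟨(Fact.out : p.Prime).ne_zero⟩
  refine ⟨(a : ZMod p).val, ZMod.val_pos.2 (Units.ne_zero a), fun _ => 1, ?_⟩
  have : ∑ _i : Fin ((a : ZMod p).val), (((1 : (ZMod p)ˣ) : ZMod p)) ^ d
      = (((a : ZMod p).val : ℕ) : ZMod p) := by
    simp [Finset.sum_const, Finset.card_univ, nsmul_eq_mul]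
  rw [this, ZMod.natCast_rightInverse]

end Waring

end WaringGF

open PowerSeries in
/-- in `ℂ[[T]]`,
`Σ_k N(k,a)·T^k = (1/p)·[1/(1−fT) + Σ_{i=0}^{d-1} η_{i+α+θ}/(1−η_i T)]` (with `N(0,a) = 0`),
and `s_d(p,a)` is the `T`-adic order of the right-hand side. -/
theorem waringCount_generating_function (p d f : ℕ) (hp : p.Prime) (hodd : Odd p)
    (hd : 2 ≤ d) (hdvd : d ∣ p - 1) (hf : f = (p - 1) / d)
    (ω : (ZMod p)ˣ) (hω : ∀ x : (ZMod p)ˣ, ∃ n : ℕ, ω ^ n = x)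
    (ζ : ℂ) (hζ : IsPrimitiveRoot ζ p)
    (a : (ZMod p)ˣ) (α : ℕ) (hα : ∃ m : ℕ, (a : ZMod p) = (ω : ZMod p) ^ (α + d * m)) :
    PowerSeries.mk (fun k => if k = 0 then (0 : ℂ) else (waringCount p d k (a : ZMod p) : ℂ))
      = C (R := ℂ) (1 / p) * ((1 - C (R := ℂ) (f : ℂ) * X)⁻¹
          + ∑ i ∈ Finset.range d, C (R := ℂ) (gaussPeriod p d f ω ζ (i + α + theta d f))
              * (1 - C (R := ℂ) (gaussPeriod p d f ω ζ i) * X)⁻¹)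
    ∧ (sWaring p d (a : ZMod p) : ℕ∞)
      = PowerSeries.order (C (R := ℂ) (1 / p) * ((1 - C (R := ℂ) (f : ℂ) * X)⁻¹
          + ∑ i ∈ Finset.range d, C (R := ℂ) (gaussPeriod p d f ω ζ (i + α + theta d f))
              * (1 - C (R := ℂ) (gaussPeriod p d f ω ζ i) * X)⁻¹)) := by
  haveI := Fact.mk hp
  obtain ⟨m, hαm⟩ := hα
  have hdf : p - 1 = d * f := by rw [hf, Nat.mul_div_cancel' hdvd]
  have hp0 : (p : ℂ) ≠ 0 := Nat.cast_ne_zero.2 hp.ne_zero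
  have key := fun k => WaringGF.key_identity (ζ := ζ) hodd (by omega) hdf hω hζ a α m hαm k
  have hN0 : waringCount p d 0 ((a : ZMod p)) = 0 := WaringGF.waringCount_zero (Units.ne_zero a)
  have hifN : ∀ k, (if k = 0 then (0 : ℂ) else (waringCount p d k (a : ZMod p) : ℂ))
      = (waringCount p d k (a : ZMod p) : ℂ) := by
    intro k
    cases k with
    | zero => simp [hN0]
    | succ k => simp
  have part1 : PowerSeries.mk
      (fun k => if k = 0 then (0 : ℂ) else (waringCount p d k (a : ZMod p) : ℂ))
      = C (R := ℂ) (1 / p) * ((1 - C (R := ℂ) (f : ℂ) * X)⁻¹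
          + ∑ i ∈ Finset.range d, C (R := ℂ) (gaussPeriod p d f ω ζ (i + α + theta d f))
              * (1 - C (R := ℂ) (gaussPeriod p d f ω ζ i) * X)⁻¹) := by
    simp only [WaringGF.geom_inv]
    ext n
    rw [PowerSeries.coeff_mk, PowerSeries.coeff_C_mul, map_add, PowerSeries.coeff_mk, map_sum]
    have hsum : ∀ i ∈ Finset.range d,
        (PowerSeries.coeff (R := ℂ) n) (C (R := ℂ) (gaussPeriod p d f ω ζ (i + α + theta d f))
          * PowerSeries.mk fun k => gaussPeriod p d f ω ζ i ^ k)
        = gaussPeriod p d f ω ζ (i + α + theta d f) * gaussPeriod p d f ω ζ i ^ n := by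
      intro i _
      rw [PowerSeries.coeff_C_mul, PowerSeries.coeff_mk]
    rw [Finset.sum_congr rfl hsum, hifN n, ← key n, one_div, ← mul_assoc,
      inv_mul_cancel₀ hp0, one_mul]
  refine ⟨part1, ?_⟩
  rw [← part1]
  have hSne := WaringGF.sWaring_set_nonempty (d := d) a
  have hmem := Nat.sInf_mem hSne
  have hsw : sWaring p d (a : ZMod p)
      ∈ {k | 1 ≤ k ∧ ∃ u : Fin k → (ZMod p)ˣ, (a : ZMod p) = ∑ i, ((u i : ZMod p)) ^ d} := hmem
  obtain ⟨h1, hu⟩ := hsw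
  symm
  rw [PowerSeries.order_eq_nat]
  constructor
  · rw [PowerSeries.coeff_mk, if_neg (by omega)]
    exact Nat.cast_ne_zero.2 ((WaringGF.waring_ne_zero_iff _ _).2 hu)
  · intro i hi
    rw [PowerSeries.coeff_mk]
    by_cases h0 : i = 0
    · simp [h0]
    rw [if_neg h0]
    by_contra hne
    have hNi : waringCount p d i (a : ZMod p) ≠ 0 := by
      intro h; exact hne (by rw [h, Nat.cast_zero])
    have hiS : i ∈ {k | 1 ≤ k ∧ ∃ u : Fin k → (ZMod p)ˣ,
        (a : ZMod p) = ∑ j, ((u j : ZMod p)) ^ d} :=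
      ⟨by omega, (WaringGF.waring_ne_zero_iff _ _).1 hNi⟩
    have hle : sWaring p d (a : ZMod p) ≤ i := Nat.sInf_le hiS
    exact absurd hle (Nat.not_le.2 hi)
end

section
/- Let p be an odd prime, d ≥ 2 with d ∣ p−1, and fix 0 ≤ j ≤ d−1. Define a sequence (c_k) of complex numbers by c_0 = 1 and c_k = −(1/k)·Σ_{l=0}^{k−1} c_l · n(k−1−l, j) for k ≥ 1. Then for every k ≥ 0, k!·c_k is a rational integer; in particular every c_k is rational. -/
open Finset

theorem nInt_isInt (p d f : ℕ) (hp : p.Prime) (hd : 2 ≤ d) (hdvd : d ∣ p - 1)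
    (hf : f = (p - 1) / d) (ω : (ZMod p)ˣ) (hω : ∀ x : (ZMod p)ˣ, ∃ n : ℕ, ω ^ n = x)
    (ζ : ℂ) (hζ : IsPrimitiveRoot ζ p) (k ν : ℕ) :
    ∃ z : ℤ, nInt p d f ω ζ k ν = (z : ℂ) := by
  haveI : Fact p.Prime := ⟨hp⟩
  have hp1 : 1 ≤ p - 1 := by have := hp.two_le; omega
  have hdf : d * f = p - 1 := by rw [hf]; exact Nat.mul_div_cancel' hdvd
  haveI : NeZero f := ⟨by
    rw [hf]
    have := Nat.div_pos (Nat.le_of_dvd (by omega) hdvd) (by omega)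
    omega⟩
  set g : ZMod p := (ω : ZMod p) with hgdef
  have hg : g ^ (p - 1) = 1 := by
    have := ZMod.units_pow_card_sub_one_eq_one p ω
    calc g ^ (p-1) = ((ω ^ (p-1) : (ZMod p)ˣ) : ZMod p) := by rw [Units.val_pow_eq_pow_val]
    _ = 1 := by rw [this, Units.val_one]
  set e : ZMod p → ℂ := fun x => ζ ^ x.val with hedef
  have hzp : ζ ^ p = 1 := hζ.pow_eq_one
  have hmod : ∀ a : ℕ, ζ ^ (a % p) = ζ ^ a := by
    intro a
    conv_rhs => rw [← Nat.div_add_mod a p]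
    rw [pow_add, pow_mul, hzp, one_pow, one_mul]
  have he0 : e 0 = 1 := by simp [hedef]
  have headd : ∀ x y : ZMod p, e (x + y) = e x * e y := by
    intro x y
    simp only [hedef]
    rw [ZMod.val_add, hmod, pow_add]
  have hesum : ∀ (s : Finset (Fin k)) (F : Fin k → ZMod p),
      e (∑ i ∈ s, F i) = ∏ i ∈ s, e (F i) := by
    intro s F
    induction s using Finset.cons_induction with
    | empty => simpa using he0
    | cons a s ha ih => rw [Finset.sum_cons, Finset.prod_cons, headd, ih]
  have hgd : ∀ a : ℕ, g ^ (d * (a % f)) = g ^ (d * a) := by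
    intro a
    have h2 : d * a = (p - 1) * (a / f) + d * (a % f) := by
      conv_lhs => rw [← Nat.div_add_mod a f]
      rw [← hdf]; ring
    rw [h2]
    conv_rhs => rw [pow_add, pow_mul, hg, one_pow, one_mul]
  have hgper : ∀ a : ℕ, g ^ (a % (p - 1)) = g ^ a := by
    intro a
    conv_rhs => rw [← Nat.div_add_mod a (p - 1), pow_add, pow_mul, hg, one_pow, one_mul]
  -- the sum over all of F_p^*
  have htot : ∑ x : ZMod p, e x = 0 := by
    have : ∑ x : ZMod p, e x = ∑ n ∈ range p, ζ ^ n := by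
      apply Finset.sum_nbij' (i := ZMod.val) (j := fun n => (n : ZMod p))
      · intro a _; exact mem_range.mpr (ZMod.val_lt a)
      · intro a _; exact mem_univ _
      · intro a _; exact ZMod.natCast_rightInverse a
      · intro a ha; exact ZMod.val_cast_of_lt (mem_range.mp ha)
      · intro a _; rfl
    rw [this, hζ.geom_sum_eq_zero hp.one_lt]
  have hord : orderOf ω = p - 1 := by
    have h1 : ∀ x : (ZMod p)ˣ, x ∈ Subgroup.zpowers ω := by
      intro x
      obtain ⟨n, hn⟩ := hω x
      exact ⟨n, by simp [zpow_natCast, hn]⟩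
    rw [orderOf_eq_card_of_forall_mem_zpowers h1]
    simpa using ZMod.card_units p
  have hsum : ∀ C : ZMod p,
      ∑ w ∈ range (p - 1), e (g ^ w * C)
        = ((if C = 0 then (p : ℤ) - 1 else -1 : ℤ) : ℂ) := by
    intro C
    by_cases hC : C = 0
    · rw [if_pos hC]
      simp only [hC, mul_zero, he0, Finset.sum_const, card_range, nsmul_eq_mul, mul_one]
      push_cast [Nat.cast_sub hp.one_le]
      ring
    · rw [if_neg hC]
      have hbij : ∑ w ∈ range (p - 1), e (g ^ w * C)
          = ∑ x ∈ (univ : Finset (ZMod p)).erase 0, e x := by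
        apply Finset.sum_bij (i := fun w _ => g ^ w * C)
        · intro w hw
          apply Finset.mem_erase.mpr
          refine ⟨mul_ne_zero ?_ hC, mem_univ _⟩
          have : g ^ w = ((ω ^ w : (ZMod p)ˣ) : ZMod p) := by
            rw [Units.val_pow_eq_pow_val]
          rw [this]
          exact Units.ne_zero _
        · intro a ha b hb hab
          have h' : g ^ a = g ^ b := by
            exact mul_right_cancel₀ hC hab
          have hu : (ω ^ a : (ZMod p)ˣ) = ω ^ b := Units.ext (by
            rw [Units.val_pow_eq_pow_val, Units.val_pow_eq_pow_val]; exact h')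
          have := pow_injOn_Iio_orderOf (x := ω)
            (by rw [hord]; exact Set.mem_Iio.mpr (mem_range.mp ha))
            (by rw [hord]; exact Set.mem_Iio.mpr (mem_range.mp hb)) hu
          exact this
        · intro x hx
          have hx0 : x ≠ 0 := (Finset.mem_erase.mp hx).1
          obtain ⟨n, hn⟩ := hω (Units.mk0 x hx0 * (Units.mk0 C hC)⁻¹)
          refine ⟨n % (p - 1), mem_range.mpr (Nat.mod_lt _ (by omega)), ?_⟩
          have hcoe : g ^ n = x * C⁻¹ := by
            have := congrArg (Units.val) hn
            rw [Units.val_pow_eq_pow_val] at this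
            simpa using this
          rw [hgper, hcoe]
          field_simp
        · intro w hw; rfl
      rw [hbij, Finset.sum_erase_eq_sub (mem_univ 0), he0, htot]
      push_cast
      ring
  -- now the main computation
  set B : (Fin k → Fin f) → ZMod p :=
    fun t => (∑ m, g ^ (d * ((t m : ℕ)))) + g ^ ν with hBdef
  have key : nInt p d f ω ζ k ν
      = ∑ t : Fin k → Fin f, ∑ i ∈ range d, ∑ v ∈ range f, e (g ^ (d * v + i) * B t) := by
    unfold nInt gaussPeriod
    have step1 : ∀ i ∈ range d,
        (∑ u ∈ range f, ζ ^ ((g ^ (d * u + i)).val)) ^ k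
          * (∑ u ∈ range f, ζ ^ ((g ^ (d * u + (i + ν))).val))
        = ∑ v : Fin f, ∑ t : Fin k → Fin f, e (g ^ (d * (v : ℕ) + i) * B t) := by
      intro i _
      rw [← Fin.sum_univ_eq_sum_range (fun u => ζ ^ ((g ^ (d * u + i)).val)) f,
        ← Fin.sum_univ_eq_sum_range (fun u => ζ ^ ((g ^ (d * u + (i + ν))).val)) f,
        Fintype.sum_pow, Finset.sum_mul]
      simp only [Finset.mul_sum]
      rw [Finset.sum_comm]
      apply Finset.sum_congr rfl
      intro v _
      have hBexp : ∀ s : Fin k → Fin f, g ^ (d * (v : ℕ) + i) * B s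
          = (∑ m, g ^ (d * (((s m + v : Fin f)) : ℕ) + i)) + g ^ (d * (v : ℕ) + (i + ν)) := by
        intro s
        rw [hBdef, mul_add, Finset.mul_sum]
        congr 1
        · apply Finset.sum_congr rfl
          intro m _
          rw [← pow_add]
          have hv : g ^ (d * (((s m + v : Fin f)) : ℕ) + i)
              = g ^ (d * ((s m : ℕ) + (v : ℕ)) + i) := by
            rw [Fin.val_add, pow_add, pow_add, hgd]
          rw [hv]
          congr 1
          ring
        · rw [← pow_add]
          congr 1
          ring
      apply Fintype.sum_equiv (Equiv.piCongrRight fun _ => Equiv.subRight v)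
      intro t
      show (∏ m, ζ ^ ((g ^ (d * ((t m : ℕ)) + i)).val))
          * ζ ^ ((g ^ (d * (v : ℕ) + (i + ν))).val)
        = e (g ^ (d * (v : ℕ) + i) * B (fun m => t m - v))
      rw [hBexp (fun m => t m - v), headd, hesum]
      simp only [sub_add_cancel]
      rfl
    rw [Finset.sum_congr rfl step1]
    rw [Finset.sum_congr rfl (fun (i : ℕ) (_ : i ∈ range d) =>
      (Finset.sum_comm (s := (univ : Finset (Fin f)))
        (t := (univ : Finset (Fin k → Fin f)))
        (f := fun v t => e (g ^ (d * (v : ℕ) + i) * B t))))]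
    rw [Finset.sum_comm]
    apply Finset.sum_congr rfl
    intro t _
    apply Finset.sum_congr rfl
    intro i _
    exact (Fin.sum_univ_eq_sum_range (fun v => e (g ^ (d * v + i) * B t)) f)
  have pair : ∀ C : ZMod p,
      ∑ i ∈ range d, ∑ v ∈ range f, e (g ^ (d * v + i) * C)
        = ∑ w ∈ range (p - 1), e (g ^ w * C) := by
    intro C
    rw [← Finset.sum_product']
    rw [← hdf]
    apply Finset.sum_nbij' (i := fun x => d * x.2 + x.1) (j := fun w => (w % d, w / d))
    · rintro ⟨a, b⟩ hab
      simp only [Finset.mem_product, mem_range] at hab ⊢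
      obtain ⟨ha, hb⟩ := hab
      calc d * b + a < d * b + d := by omega
        _ = d * (b + 1) := by ring
        _ ≤ d * f := Nat.mul_le_mul_left d hb
    · intro w hw
      simp only [Finset.mem_product, mem_range] at hw ⊢
      constructor
      · exact Nat.mod_lt _ (by omega)
      · exact Nat.div_lt_of_lt_mul (by rw [mul_comm] at hw ⊢; exact hw)
    · rintro ⟨a, b⟩ hab
      simp only [Finset.mem_product, mem_range] at hab
      obtain ⟨ha, hb⟩ := hab
      have h1 : (d * b + a) % d = a := by
        rw [add_comm, Nat.add_mul_mod_self_left, Nat.mod_eq_of_lt ha]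
      have h2 : (d * b + a) / d = b := by
        rw [add_comm, Nat.add_mul_div_left _ _ (by omega : 0 < d), Nat.div_eq_of_lt ha,
          zero_add]
      simp [h1, h2]
    · intro w _
      exact Nat.div_add_mod w d
    · rintro ⟨a, b⟩ _
      rfl
  refine ⟨∑ t : Fin k → Fin f, (if B t = 0 then (p : ℤ) - 1 else -1), ?_⟩
  rw [key]
  push_cast
  apply Finset.sum_congr rfl
  intro t _
  rw [pair (B t), hsum (B t)]
  push_cast
  rfl

/-- for the recursively defined coefficients
`c₀ = 1`, `c_k = −(1/k)·Σ_{l=0}^{k-1} c_l·n(k−1−l,j)`, each `k!·c_k` is a rational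
integer; in particular every `c_k` is rational. -/
theorem coeff_factorial_integer (p d f : ℕ) (hp : p.Prime) (hodd : Odd p)
    (hd : 2 ≤ d) (hdvd : d ∣ p - 1) (hf : f = (p - 1) / d)
    (ω : (ZMod p)ˣ) (hω : ∀ x : (ZMod p)ˣ, ∃ n : ℕ, ω ^ n = x)
    (ζ : ℂ) (hζ : IsPrimitiveRoot ζ p)
    (j : ℕ) (hj : j < d)
    (c : ℕ → ℂ) (hc0 : c 0 = 1)
    (hc : ∀ k, 1 ≤ k →
      c k = -(1 / (k : ℂ)) * ∑ l ∈ Finset.range k, c l * nInt p d f ω ζ (k - 1 - l) j) :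
    ∀ k, (∃ z : ℤ, ((k.factorial : ℂ)) * c k = (z : ℂ)) ∧ (∃ q : ℚ, c k = (q : ℂ)) := by
  have hNex : ∀ m : ℕ, ∃ z : ℤ, nInt p d f ω ζ m j = (z : ℂ) :=
    fun m => nInt_isInt p d f hp hd hdvd hf ω hω ζ hζ m j
  choose N hN using hNex
  have main : ∀ k, ∃ z : ℤ, ((k.factorial : ℂ)) * c k = (z : ℂ) := by
    intro k
    induction k using Nat.strong_induction_on with
    | _ k ih =>
      by_cases hk0 : k = 0
      · exact ⟨1, by simp [hk0, hc0]⟩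
      · have hk1 : 1 ≤ k := Nat.one_le_iff_ne_zero.mpr hk0
        have ih' : ∀ l, ∃ z : ℤ, l < k → ((l.factorial : ℂ)) * c l = (z : ℂ) := by
          intro l
          by_cases hl : l < k
          · obtain ⟨z, hz⟩ := ih l hl
            exact ⟨z, fun _ => hz⟩
          · exact ⟨0, fun h => absurd h hl⟩
        choose Z hZ using ih'
        refine ⟨-∑ l ∈ Finset.range k,
          (((k - 1).factorial / l.factorial : ℕ) : ℤ) * Z l * N (k - 1 - l), ?_⟩
        rw [hc k hk1]
        have hkne : (k : ℂ) ≠ 0 := Nat.cast_ne_zero.mpr hk0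
        have hkfac : (k.factorial : ℂ) = (k : ℂ) * ((k - 1).factorial : ℂ) := by
          rw [← Nat.cast_mul, Nat.mul_factorial_pred (by omega)]
        have hstep : (k.factorial : ℂ) *
            (-(1 / (k : ℂ)) * ∑ l ∈ Finset.range k, c l * nInt p d f ω ζ (k - 1 - l) j)
            = -(((k - 1).factorial : ℂ) *
                ∑ l ∈ Finset.range k, c l * nInt p d f ω ζ (k - 1 - l) j) := by
          rw [hkfac]
          field_simp
        rw [hstep, Int.cast_neg, neg_inj, Int.cast_sum, Finset.mul_sum]
        apply Finset.sum_congr rfl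
        intro l hl
        have hlk : l < k := Finset.mem_range.mp hl
        have hz := hZ l hlk
        have hdd : (k - 1).factorial = (k - 1).factorial / l.factorial * l.factorial :=
          (Nat.div_mul_cancel (Nat.factorial_dvd_factorial (by omega : l ≤ k - 1))).symm
        have hdd' : ((k - 1).factorial : ℂ)
            = (((k - 1).factorial / l.factorial : ℕ) : ℂ) * (l.factorial : ℂ) := by
          rw [← Nat.cast_mul, ← hdd]
        rw [hN (k - 1 - l), hdd', Int.cast_mul, Int.cast_mul, Int.cast_natCast]
        linear_combination ((((k - 1).factorial / l.factorial : ℕ) : ℂ)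
          * ((N (k - 1 - l) : ℤ) : ℂ)) * hz
  intro k
  refine ⟨main k, ?_⟩
  obtain ⟨z, hz⟩ := main k
  refine ⟨(z : ℚ) / (k.factorial : ℚ), ?_⟩
  have hfne : ((k.factorial : ℕ) : ℂ) ≠ 0 := Nat.cast_ne_zero.mpr k.factorial_ne_zero
  have hcast : (((z : ℚ) / (k.factorial : ℚ) : ℚ) : ℂ) = (z : ℂ) / ((k.factorial : ℕ) : ℂ) := by
    push_cast
    ring
  rw [hcast, eq_div_iff hfne]
  linear_combination hz
end

section
/- (Theorem 4) Let p be a prime with p ≡ 1 mod 3. Then g_3(p) = 3 if p = 7, and g_3(p) = 2 for every other such prime p. -/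
open Finset

section AuxWaring

set_option linter.unusedSectionVars false

variable {p : ℕ} [hp : Fact p.Prime]

lemma exists_chi (h3 : p % 3 = 1) :
    ∃ χ : MulChar (ZMod p) ℂ, χ ^ 3 = 1 ∧ χ ≠ 1 ∧ χ ^ 2 ≠ 1 ∧
      ∀ u : (ZMod p)ˣ, χ u = 1 ↔ ∃ v : (ZMod p)ˣ, v ^ 3 = u := by
  have hdvd : 3 ∣ Fintype.card (ZMod p) - 1 := by
    rw [ZMod.card]
    omega
  obtain ⟨χ, hord⟩ := MulChar.exists_mulChar_orderOf (ZMod p) hdvd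
    (Complex.isPrimitiveRoot_exp 3 (by norm_num))
  have hχ3 : χ ^ 3 = 1 := by rw [← hord]; exact pow_orderOf_eq_one χ
  have hχ1 : χ ≠ 1 := by
    intro h
    rw [h, orderOf_one] at hord
    norm_num at hord
  have hχ2 : χ ^ 2 ≠ 1 := by
    intro h
    have := orderOf_dvd_of_pow_eq_one h
    rw [hord] at this
    norm_num at this
  obtain ⟨g, hg⟩ := IsCyclic.exists_generator (α := (ZMod p)ˣ)
  have hgval : (χ g) ^ 3 = 1 := by
    rw [← MulChar.pow_apply' χ (by norm_num) g, hχ3, MulChar.one_apply_coe]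
  have hgne : χ g ≠ 1 := by
    intro h
    exact hχ1 ((MulChar.eq_iff hg χ 1).mpr (by rw [h, MulChar.one_apply_coe]))
  refine ⟨χ, hχ3, hχ1, hχ2, fun u => ?_⟩
  obtain ⟨k, hk⟩ := hg u
  constructor
  · intro h1
    have hzp : (χ.equivToUnitHom g) ^ k = χ.equivToUnitHom u := by
      rw [← map_zpow]; exact congrArg _ hk
    have hz3 : (χ.equivToUnitHom g) ^ (3:ℕ) = 1 := by
      ext
      rw [Units.val_pow_eq_pow_val, MulChar.coe_equivToUnitHom, Units.val_one]
      exact hgval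
    have hzne : χ.equivToUnitHom g ≠ 1 := by
      intro h
      apply hgne
      rw [← MulChar.coe_equivToUnitHom, h, Units.val_one]
    have hordz : orderOf (χ.equivToUnitHom g) = 3 := by
      have hdvd3 : orderOf (χ.equivToUnitHom g) ∣ 3 := orderOf_dvd_of_pow_eq_one hz3
      rcases (Nat.prime_three.eq_one_or_self_of_dvd _ hdvd3) with h | h
      · exact absurd (orderOf_eq_one_iff.mp h) hzne
      · exact h
    have hzk : (χ.equivToUnitHom g) ^ k = 1 := by
      rw [hzp]
      ext
      rw [MulChar.coe_equivToUnitHom, h1, Units.val_one]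
    have h3k : (3:ℤ) ∣ k := by
      have := orderOf_dvd_iff_zpow_eq_one.mpr hzk
      rw [hordz] at this
      exact_mod_cast this
    obtain ⟨t, rfl⟩ := h3k
    refine ⟨g ^ t, ?_⟩
    rw [← zpow_natCast, ← zpow_mul]
    rw [show (t * (3:ℕ) : ℤ) = 3 * t by push_cast; ring]
    exact hk
  · rintro ⟨v, rfl⟩
    push_cast
    rw [map_pow, ← MulChar.pow_apply' χ (by norm_num), hχ3, MulChar.one_apply_coe]


/-- number of units cubing to `u` -/
noncomputable def rct (p : ℕ) [Fact p.Prime] (u : ZMod p) : ℕ :=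
  (univ.filter fun x : (ZMod p)ˣ => (x : ZMod p) ^ 3 = u).card

lemma rct_zero : rct p 0 = 0 := by
  rw [rct, Finset.card_eq_zero, Finset.filter_eq_empty_iff]
  intro x _
  intro h
  exact (x ^ 3).ne_zero (by push_cast at h ⊢; exact h)

lemma card_cubeRootsOne (h3 : p % 3 = 1) :
    (univ.filter fun w : (ZMod p)ˣ => w ^ 3 = 1).card = 3 := by
  have h2 : Fact (Nat.Prime 3) := ⟨by norm_num⟩
  have hdvd : 3 ∣ Fintype.card (ZMod p)ˣ := by
    rw [ZMod.card_units_eq_totient, Nat.totient_prime hp.out]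
    omega
  obtain ⟨ζ, hζ⟩ := exists_prime_orderOf_dvd_card 3 hdvd
  refine le_antisymm (IsCyclic.card_pow_eq_one_le (by norm_num)) ?_
  have hzne : ζ ≠ 1 := by
    intro h; rw [h, orderOf_one] at hζ; norm_num at hζ
  have hz2 : ζ ^ 2 ≠ 1 := by
    intro h
    have := orderOf_dvd_of_pow_eq_one h
    rw [hζ] at this; norm_num at this
  have hz3 : ζ ^ 3 = 1 := by rw [← hζ]; exact pow_orderOf_eq_one ζ
  have hsub : ({1, ζ, ζ ^ 2} : Finset (ZMod p)ˣ) ⊆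
      univ.filter fun w : (ZMod p)ˣ => w ^ 3 = 1 := by
    intro w hw
    simp only [mem_insert, mem_singleton] at hw
    simp only [mem_filter, mem_univ, true_and]
    rcases hw with rfl | rfl | rfl
    · exact one_pow 3
    · exact hz3
    · rw [← pow_mul]; rw [show 2 * 3 = 3 * 2 by ring, pow_mul, hz3, one_pow]
  have hcard : ({1, ζ, ζ ^ 2} : Finset (ZMod p)ˣ).card = 3 := by
    rw [Finset.card_insert_of_notMem, Finset.card_insert_of_notMem, Finset.card_singleton]
    · simp only [mem_singleton]
      intro h
      have h2 : ζ * 1 = ζ * ζ := by rw [mul_one, ← pow_two, ← h]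
      exact hzne (mul_left_cancel h2).symm
    · simp only [mem_insert, mem_singleton]
      push_neg
      exact ⟨fun h => hzne h.symm, fun h => hz2 h.symm⟩
  calc 3 = ({1, ζ, ζ ^ 2} : Finset (ZMod p)ˣ).card := hcard.symm
    _ ≤ _ := Finset.card_le_card hsub

lemma rct_cube (h3 : p % 3 = 1) {u : ZMod p} {v : (ZMod p)ˣ} (hv : ((v : ZMod p)) ^ 3 = u) :
    rct p u = 3 := by
  have key : (univ.filter fun x : (ZMod p)ˣ => (x : ZMod p) ^ 3 = u).card
      = (univ.filter fun w : (ZMod p)ˣ => w ^ 3 = 1).card := by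
    apply Finset.card_bij' (fun x _ => x * v⁻¹) (fun w _ => w * v)
    · intro x hx
      simp only [mem_filter, mem_univ, true_and] at hx ⊢
      have hx' : x ^ 3 = v ^ 3 := by
        ext
        push_cast
        rw [hx, ← hv]
      rw [mul_pow, hx', ← mul_pow, mul_inv_cancel, one_pow]
    · intro w hw
      simp only [mem_filter, mem_univ, true_and] at hw ⊢
      have h1 : (w * v) ^ 3 = 1 * v ^ 3 := by rw [mul_pow, hw]
      have h2 : ((w * v : (ZMod p)ˣ) : ZMod p) ^ 3 = ((((w * v) ^ 3 : (ZMod p)ˣ)) : ZMod p) := by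
        push_cast; ring
      rw [h2, h1, one_mul]
      exact hv
    · intro x _; group
    · intro w _; group
  rw [rct, key, card_cubeRootsOne h3]

lemma rct_noncube {u : ZMod p} (h : ¬ ∃ v : (ZMod p)ˣ, ((v : ZMod p)) ^ 3 = u) :
    rct p u = 0 := by
  rw [rct, Finset.card_eq_zero, Finset.filter_eq_empty_iff]
  intro x _ hx
  exact h ⟨x, hx⟩

lemma ncount (a : ZMod p) :
    (univ.filter fun xy : (ZMod p)ˣ × (ZMod p)ˣ =>
        ((xy.1 : ZMod p)) ^ 3 + ((xy.2 : ZMod p)) ^ 3 = a).card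
      = ∑ u : ZMod p, rct p u * rct p (a - u) := by
  rw [Finset.card_eq_sum_card_fiberwise
    (f := fun xy : (ZMod p)ˣ × (ZMod p)ˣ => ((xy.1 : ZMod p)) ^ 3) (t := univ)
    (fun _ _ => mem_univ _)]
  refine Finset.sum_congr rfl fun u _ => ?_
  rw [Finset.filter_filter]
  have heq : (univ.filter fun xy : (ZMod p)ˣ × (ZMod p)ˣ =>
      (((xy.1 : ZMod p)) ^ 3 + ((xy.2 : ZMod p)) ^ 3 = a) ∧ ((xy.1 : ZMod p)) ^ 3 = u)
      = (univ.filter fun x : (ZMod p)ˣ => ((x : ZMod p)) ^ 3 = u) ×ˢ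
        (univ.filter fun y : (ZMod p)ˣ => ((y : ZMod p)) ^ 3 = a - u) := by
    rw [← Finset.filter_product, ← Finset.univ_product_univ]
    congr 1
    ext xy
    constructor
    · rintro ⟨h1, h2⟩
      exact ⟨h2, by rw [← h1, h2]; ring⟩
    · rintro ⟨h1, h2⟩
      exact ⟨by rw [h1, h2]; ring, h1⟩
  rw [heq, Finset.card_product]
  rfl

lemma rct_eq_sum_chi (h3 : p % 3 = 1) {χ : MulChar (ZMod p) ℂ} (hχ3 : χ ^ 3 = 1)
    (hiff : ∀ u : (ZMod p)ˣ, χ u = 1 ↔ ∃ v : (ZMod p)ˣ, v ^ 3 = u)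
    {u : ZMod p} (hu : u ≠ 0) :
    (rct p u : ℂ) = ∑ j ∈ range 3, (χ ^ j) u := by
  obtain ⟨u₀, rfl⟩ := hu.isUnit
  have hrhs : ∑ j ∈ range 3, (χ ^ j) ↑u₀ = 1 + χ ↑u₀ + (χ ↑u₀) ^ 2 := by
    simp [Finset.sum_range_succ, MulChar.pow_apply_coe]
  have hz3 : (χ ↑u₀) ^ 3 = 1 := by
    rw [← MulChar.pow_apply_coe, hχ3, MulChar.one_apply_coe]
  by_cases hc : ∃ v : (ZMod p)ˣ, v ^ 3 = u₀
  · have hz1 : χ ↑u₀ = 1 := (hiff u₀).mpr hc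
    obtain ⟨v, hv⟩ := hc
    have hv' : ((v : ZMod p)) ^ 3 = ↑u₀ := by
      rw [← hv]; push_cast; ring
    rw [rct_cube h3 hv', hrhs, hz1]
    norm_num
  · have hz1 : χ ↑u₀ ≠ 1 := fun h => hc ((hiff u₀).mp h)
    have hc' : ¬ ∃ v : (ZMod p)ˣ, ((v : ZMod p)) ^ 3 = ↑u₀ := by
      rintro ⟨v, hv⟩
      refine hc ⟨v, ?_⟩
      ext
      push_cast
      exact hv
    rw [rct_noncube hc', hrhs]
    have hfac : (χ ↑u₀ - 1) * (1 + χ ↑u₀ + (χ ↑u₀) ^ 2) = (χ ↑u₀) ^ 3 - 1 := by ring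
    rw [hz3, sub_self] at hfac
    have := mul_eq_zero.mp hfac
    rcases this with h | h
    · exact absurd (by linear_combination h : χ ↑u₀ = 1) hz1
    · rw [Nat.cast_zero, h]

lemma norm_jacobiSum {ψ : MulChar (ZMod p) ℂ} (hψ : ψ ≠ 1) (hψψ : ψ * ψ ≠ 1) :
    ‖jacobiSum ψ ψ‖ = Real.sqrt p := by
  have hchar : ringChar ℂ ≠ ringChar (ZMod p) := by
    rw [ringChar.eq_zero, ZMod.ringChar_zmod_n]
    exact fun h => hp.out.ne_zero h.symm
  have h := jacobiSum_mul_jacobiSum_inv hchar hψ hψ hψψ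
  have hconj : jacobiSum ψ⁻¹ ψ⁻¹ = starRingEnd ℂ (jacobiSum ψ ψ) := by
    rw [jacobiSum, jacobiSum, map_sum]
    exact (sum_congr rfl fun x _ => by
      rw [map_mul, ← MulChar.star_apply', ← MulChar.star_apply']; rfl).symm
  rw [hconj, Complex.mul_conj] at h
  have hsq : Complex.normSq (jacobiSum ψ ψ) = p := by
    rw [ZMod.card] at h
    exact_mod_cast h
  rw [Complex.norm_def, hsq]

lemma exists_two_cubes (h3 : p % 3 = 1) (hbig : 17 ≤ p) {a : ZMod p} (ha : a ≠ 0) :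
    ∃ x y : (ZMod p)ˣ, ((x : ZMod p)) ^ 3 + ((y : ZMod p)) ^ 3 = a := by
  by_contra hcon
  push_neg at hcon
  obtain ⟨χ, hχ3, hχ1, hχ2, hiff⟩ := exists_chi h3
  have hN : (univ.filter fun xy : (ZMod p)ˣ × (ZMod p)ˣ =>
      ((xy.1 : ZMod p)) ^ 3 + ((xy.2 : ZMod p)) ^ 3 = a).card = 0 := by
    rw [Finset.card_eq_zero, Finset.filter_eq_empty_iff]
    rintro ⟨x, y⟩ _ h
    exact hcon x y h
  have hsum0 : ∑ u : ZMod p, rct p u * rct p (a - u) = 0 := by rw [← ncount a, hN]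
  set U : Finset (ZMod p) := univ \ {0, a} with hU
  have hmemU : ∀ u ∈ U, u ≠ 0 ∧ a - u ≠ 0 := by
    intro u hu
    rw [hU, Finset.mem_sdiff, Finset.mem_insert, Finset.mem_singleton] at hu
    push_neg at hu
    exact ⟨hu.2.1, sub_ne_zero.mpr (Ne.symm hu.2.2)⟩
  have hUcard : (U.card : ℂ) = (p : ℂ) - 2 := by
    rw [hU, Finset.card_sdiff_of_subset (by intro x hx; exact mem_univ x)]
    rw [Finset.card_insert_of_notMem (by simp [Ne.symm ha]), Finset.card_singleton,
      Finset.card_univ, ZMod.card]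
    have : 2 ≤ p := hp.out.two_le
    push_cast [Nat.cast_sub this]
    ring
  -- the vanishing identity over U
  have hcast : (0 : ℂ) = ∑ u ∈ U, (rct p u : ℂ) * (rct p (a - u) : ℂ) := by
    have hv : ∀ u ∈ (univ : Finset (ZMod p)), u ∉ U → (rct p u : ℂ) * (rct p (a - u) : ℂ) = 0 := by
      intro u _ hu
      rw [hU, Finset.mem_sdiff] at hu
      push_neg at hu
      have := hu (mem_univ u)
      rw [Finset.mem_insert, Finset.mem_singleton] at this
      rcases this with rfl | rfl
      · rw [rct_zero]; push_cast; ring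
      · rw [sub_self, rct_zero]; push_cast; ring
    rw [Finset.sum_subset (Finset.subset_univ U) hv]
    have : (0 : ℂ) = ((∑ u : ZMod p, rct p u * rct p (a - u) : ℕ) : ℂ) := by
      rw [hsum0]; norm_num
    rw [this]
    push_cast
    rfl
  have hchar : ∀ u ∈ U, (rct p u : ℂ) * (rct p (a - u) : ℂ)
      = ∑ j ∈ range 3, ∑ k ∈ range 3, (χ ^ j) u * (χ ^ k) (a - u) := by
    intro u hu
    obtain ⟨h1, h2⟩ := hmemU u hu
    rw [rct_eq_sum_chi h3 hχ3 hiff h1, rct_eq_sum_chi h3 hχ3 hiff h2,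
      Finset.sum_mul_sum]
  have hswap : (0 : ℂ) = ∑ j ∈ range 3, ∑ k ∈ range 3, ∑ u ∈ U, (χ ^ j) u * (χ ^ k) (a - u) := by
    rw [hcast, Finset.sum_congr rfl hchar, Finset.sum_comm]
    exact Finset.sum_congr rfl fun j _ => Finset.sum_comm
  -- names for the nine terms
  obtain ⟨T, hT⟩ : ∃ T : ℕ → ℕ → ℂ, T = fun j k => ∑ u ∈ U, (χ ^ j) u * (χ ^ k) (a - u) :=
    ⟨_, rfl⟩
  have hexp : (0 : ℂ) = T 0 0 + T 0 1 + T 0 2 + T 1 0 + T 1 1 + T 1 2 + T 2 0 + T 2 1 + T 2 2 := by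
    simp only [hT]
    rw [hswap]
    simp only [Finset.sum_range_succ, Finset.sum_range_zero]
    ring
  -- helper facts
  have hzero : ∀ ψ : MulChar (ZMod p) ℂ, ψ (0 : ZMod p) = 0 := fun ψ =>
    ψ.map_nonunit not_isUnit_zero
  have hnorm1 : ∀ ψ : MulChar (ZMod p) ℂ, ψ ^ 3 = 1 → ∀ b : ZMod p, b ≠ 0 → ‖ψ b‖ = 1 := by
    intro ψ hψ b hb
    obtain ⟨b₀, rfl⟩ := hb.isUnit
    refine Complex.norm_eq_one_of_pow_eq_one (n := 3) ?_ (by norm_num)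
    rw [← MulChar.pow_apply_coe, hψ, MulChar.one_apply_coe]
  have hpow3 : ∀ j : ℕ, (χ ^ j) ^ 3 = 1 := fun j => by
    rw [← pow_mul, mul_comm, pow_mul, hχ3, one_pow]
  have hc2 : (χ ^ 2) ^ 3 = 1 := hpow3 2
  have h0a : ({0, a} : Finset (ZMod p)) ⊆ univ := Finset.subset_univ _
  have h0na : (0 : ZMod p) ∉ ({a} : Finset (ZMod p)) := by
    rw [Finset.mem_singleton]; exact fun h => ha h.symm
  have hsum_sdiff : ∀ ψ : MulChar (ZMod p) ℂ, ψ ≠ 1 → ∑ u ∈ U, ψ u = - ψ a := by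
    intro ψ hψ
    rw [hU, Finset.sum_sdiff_eq_sub h0a, MulChar.sum_eq_zero_of_ne_one hψ,
      Finset.sum_insert h0na, Finset.sum_singleton, hzero ψ]
    ring
  have hsum_sdiff' : ∀ ψ : MulChar (ZMod p) ℂ, ψ ≠ 1 → ∑ u ∈ U, ψ (a - u) = - ψ a := by
    intro ψ hψ
    rw [hU, Finset.sum_sdiff_eq_sub h0a]
    have h1 : ∑ u : ZMod p, ψ (a - u) = ∑ v : ZMod p, ψ v :=
      Fintype.sum_equiv (Equiv.subLeft a) _ _ (fun u => rfl)
    rw [h1, MulChar.sum_eq_zero_of_ne_one hψ, Finset.sum_insert h0na,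
      Finset.sum_singleton, sub_zero, sub_self, hzero ψ]
    ring
  have hTjk : ∀ ψ φ : MulChar (ZMod p) ℂ,
      ∑ u ∈ U, ψ u * φ (a - u) = ψ a * φ a * jacobiSum ψ φ := by
    intro ψ φ
    have hext : ∑ u ∈ U, ψ u * φ (a - u) = ∑ u : ZMod p, ψ u * φ (a - u) := by
      apply Finset.sum_subset (Finset.subset_univ U)
      intro u _ hu
      rw [hU, Finset.mem_sdiff] at hu
      push_neg at hu
      have := hu (mem_univ u)
      rw [Finset.mem_insert, Finset.mem_singleton] at this
      rcases this with rfl | rfl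
      · rw [hzero ψ, zero_mul]
      · rw [sub_self, hzero φ, mul_zero]
    have hre : ∑ u : ZMod p, ψ u * φ (a - u) = ∑ t : ZMod p, ψ (a * t) * φ (a - a * t) :=
      (Fintype.sum_equiv (Equiv.mulLeft₀ a ha) _ _ (fun t => rfl)).symm
    rw [hext, hre]
    have hterm : ∀ t : ZMod p, ψ (a * t) * φ (a - a * t)
        = (ψ a * φ a) * (ψ t * φ (1 - t)) := by
      intro t
      have : a - a * t = a * (1 - t) := by ring
      rw [this, map_mul, map_mul]
      ring
    rw [Finset.sum_congr rfl fun t _ => hterm t, ← Finset.mul_sum]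
    unfold jacobiSum
    ring
  -- values of the nine terms
  have hT00 : T 0 0 = (p : ℂ) - 2 := by
    simp only [hT, pow_zero]
    have : ∑ u ∈ U, (1 : MulChar (ZMod p) ℂ) u * (1 : MulChar (ZMod p) ℂ) (a - u)
        = ∑ _u ∈ U, (1 : ℂ) := by
      refine Finset.sum_congr rfl fun u hu => ?_
      obtain ⟨h1, h2⟩ := hmemU u hu
      rw [MulChar.one_apply h1.isUnit, MulChar.one_apply h2.isUnit, one_mul]
    rw [this, Finset.sum_const, nsmul_eq_mul, mul_one, hUcard]
  have hne : ∀ j, j = 1 ∨ j = 2 → χ ^ j ≠ 1 := by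
    intro j hj
    rcases hj with rfl | rfl
    · rwa [pow_one]
    · exact hχ2
  have hTj0 : ∀ j, j = 1 ∨ j = 2 → ‖T j 0‖ = 1 := by
    intro j hj
    have : T j 0 = - (χ ^ j) a := by
      simp only [hT, pow_zero]
      rw [← hsum_sdiff (χ ^ j) (hne j hj)]
      refine Finset.sum_congr rfl fun u hu => ?_
      rw [MulChar.one_apply (hmemU u hu).2.isUnit, mul_one]
    rw [this, norm_neg, hnorm1 (χ ^ j) (hpow3 j) a ha]
  have hT0k : ∀ k, k = 1 ∨ k = 2 → ‖T 0 k‖ = 1 := by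
    intro k hk
    have : T 0 k = - (χ ^ k) a := by
      simp only [hT, pow_zero]
      rw [← hsum_sdiff' (χ ^ k) (hne k hk)]
      refine Finset.sum_congr rfl fun u hu => ?_
      rw [MulChar.one_apply (hmemU u hu).1.isUnit, one_mul]
    rw [this, norm_neg, hnorm1 (χ ^ k) (hpow3 k) a ha]
  have hm1 : (-1 : ZMod p) ≠ 0 := by
    simp only [ne_eq, neg_eq_zero]
    exact one_ne_zero
  have hnormJ : ∀ ψ φ : MulChar (ZMod p) ℂ, ψ ^ 3 = 1 → φ ^ 3 = 1 →
      ∀ J : ℂ, jacobiSum ψ φ = J → ‖ψ a * φ a * jacobiSum ψ φ‖ = ‖J‖ := by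
    intro ψ φ hψ hφ J hJ
    rw [norm_mul, norm_mul, hnorm1 ψ hψ a ha, hnorm1 φ hφ a ha, hJ]
    ring
  have hinv2 : χ ^ 2 = χ⁻¹ := by
    refine (inv_eq_of_mul_eq_one_right ?_).symm
    rw [← pow_succ']
    exact hχ3
  have hinv1 : χ = (χ ^ 2)⁻¹ := by
    refine (inv_eq_of_mul_eq_one_right ?_).symm
    rw [← pow_succ]
    exact hχ3
  have hT11 : ‖T 1 1‖ = Real.sqrt p := by
    have h1 : T 1 1 = χ a * χ a * jacobiSum χ χ := by
      simp only [hT, pow_one]; exact hTjk χ χ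
    rw [h1, hnormJ χ χ hχ3 hχ3 _ rfl]
    exact norm_jacobiSum hχ1 (by rw [← pow_two]; exact hχ2)
  have hT22 : ‖T 2 2‖ = Real.sqrt p := by
    have h1 : T 2 2 = (χ ^ 2) a * (χ ^ 2) a * jacobiSum (χ ^ 2) (χ ^ 2) := by
      simp only [hT]; exact hTjk (χ ^ 2) (χ ^ 2)
    rw [h1, hnormJ (χ ^ 2) (χ ^ 2) hc2 hc2 _ rfl]
    refine norm_jacobiSum hχ2 ?_
    have : χ ^ 2 * χ ^ 2 = χ ^ 3 * χ := by
      rw [← pow_add, ← pow_succ]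
    rw [this, hχ3, one_mul]
    exact hχ1
  have hT12 : ‖T 1 2‖ = 1 := by
    have h1 : T 1 2 = χ a * (χ ^ 2) a * jacobiSum χ (χ ^ 2) := by
      simp only [hT, pow_one]; exact hTjk χ (χ ^ 2)
    have hJ : jacobiSum χ (χ ^ 2) = - χ (-1) := by
      rw [hinv2]; exact jacobiSum_nontrivial_inv hχ1
    rw [h1, hnormJ χ (χ ^ 2) hχ3 hc2 _ hJ, norm_neg, hnorm1 χ hχ3 (-1) hm1]
  have hT21 : ‖T 2 1‖ = 1 := by
    have h1 : T 2 1 = (χ ^ 2) a * χ a * jacobiSum (χ ^ 2) χ := by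
      simp only [hT, pow_one]; exact hTjk (χ ^ 2) χ
    have hJ : jacobiSum (χ ^ 2) χ = - χ (-1) := by
      rw [jacobiSum_comm, hinv2]; exact jacobiSum_nontrivial_inv hχ1
    rw [h1, hnormJ (χ ^ 2) χ hc2 hχ3 _ hJ, norm_neg, hnorm1 χ hχ3 (-1) hm1]
  -- assemble
  have h1 : T 0 0 = -(T 0 1 + T 0 2 + T 1 0 + T 1 1 + T 1 2 + T 2 0 + T 2 1 + T 2 2) := by
    linear_combination -hexp
  have hn00 : ‖T 0 0‖ = (p : ℝ) - 2 := by
    have h2 : (((p - 2 : ℕ)) : ℂ) = (p : ℂ) - 2 := by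
      rw [Nat.cast_sub hp.out.two_le]; norm_num
    rw [hT00, ← h2, Complex.norm_natCast, Nat.cast_sub hp.out.two_le]
    norm_num
  have n1 := norm_add_le (T 0 1) (T 0 2)
  have n2 := norm_add_le (T 0 1 + T 0 2) (T 1 0)
  have n3 := norm_add_le (T 0 1 + T 0 2 + T 1 0) (T 1 1)
  have n4 := norm_add_le (T 0 1 + T 0 2 + T 1 0 + T 1 1) (T 1 2)
  have n5 := norm_add_le (T 0 1 + T 0 2 + T 1 0 + T 1 1 + T 1 2) (T 2 0)
  have n6 := norm_add_le (T 0 1 + T 0 2 + T 1 0 + T 1 1 + T 1 2 + T 2 0) (T 2 1)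
  have n7 := norm_add_le (T 0 1 + T 0 2 + T 1 0 + T 1 1 + T 1 2 + T 2 0 + T 2 1) (T 2 2)
  have hfin : (p : ℝ) - 2 ≤ 6 + 2 * Real.sqrt p := by
    have e1 := hT0k 1 (Or.inl rfl)
    have e2 := hT0k 2 (Or.inr rfl)
    have e3 := hTj0 1 (Or.inl rfl)
    have e4 := hTj0 2 (Or.inr rfl)
    have e5 : ‖T 0 0‖ = ‖T 0 1 + T 0 2 + T 1 0 + T 1 1 + T 1 2 + T 2 0 + T 2 1 + T 2 2‖ := by
      rw [h1, norm_neg]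
    rw [hn00] at e5
    linarith [e5.le]
  have hs := Real.sq_sqrt (le_of_lt (by positivity : (0:ℝ) < (p:ℝ)))
  have hs0 := Real.sqrt_nonneg (p : ℝ)
  have hple : (17 : ℝ) ≤ (p : ℝ) := by exact_mod_cast hbig
  nlinarith [sq_nonneg (Real.sqrt p - 4)]

def SW (p : ℕ) (a : ZMod p) : Set ℕ :=
  {k | 1 ≤ k ∧ ∃ u : Fin k → (ZMod p)ˣ, a = ∑ i, ((u i : ZMod p)) ^ 3}

lemma sWaring_eq_sInf (a : ZMod p) : sWaring p 3 a = sInf (SW p a) := rfl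

lemma one_mem_SW {a : ZMod p} (h : ∃ v : (ZMod p)ˣ, ((v : ZMod p)) ^ 3 = a) :
    1 ∈ SW p a := by
  obtain ⟨v, hv⟩ := h
  exact ⟨le_refl 1, fun _ => v, by rw [Fin.sum_univ_one, hv]⟩

lemma two_mem_SW {a : ZMod p} (h : ∃ x y : (ZMod p)ˣ, ((x : ZMod p)) ^ 3 + ((y : ZMod p)) ^ 3 = a) :
    2 ∈ SW p a := by
  obtain ⟨x, y, hxy⟩ := h
  refine ⟨by norm_num, ![x, y], ?_⟩
  rw [Fin.sum_univ_two]
  simp only [Matrix.cons_val_zero, Matrix.cons_val_one, Matrix.head_cons]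
  exact hxy.symm

lemma three_mem_SW {a : ZMod p}
    (h : ∃ x y z : (ZMod p)ˣ, ((x : ZMod p)) ^ 3 + ((y : ZMod p)) ^ 3 + ((z : ZMod p)) ^ 3 = a) :
    3 ∈ SW p a := by
  obtain ⟨x, y, z, hxyz⟩ := h
  refine ⟨by norm_num, ![x, y, z], ?_⟩
  rw [Fin.sum_univ_three]
  simp only [Matrix.cons_val_zero, Matrix.cons_val_one, Matrix.head_cons,
    Matrix.cons_val_two, Matrix.tail_cons]
  exact hxyz.symm

lemma one_not_mem_SW {a : ZMod p} (h : ¬ ∃ v : (ZMod p)ˣ, ((v : ZMod p)) ^ 3 = a) :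
    1 ∉ SW p a := by
  rintro ⟨-, u, hu⟩
  exact h ⟨u 0, by rw [hu, Fin.sum_univ_one]⟩

lemma two_not_mem_SW {a : ZMod p}
    (h : ¬ ∃ x y : (ZMod p)ˣ, ((x : ZMod p)) ^ 3 + ((y : ZMod p)) ^ 3 = a) :
    2 ∉ SW p a := by
  rintro ⟨-, u, hu⟩
  exact h ⟨u 0, u 1, by rw [hu, Fin.sum_univ_two]⟩

lemma sWaring_le_of_mem {a : ZMod p} {k n : ℕ} (hk : k ∈ SW p a) (hkn : k ≤ n) :
    sWaring p 3 a ≤ n := by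
  rw [sWaring_eq_sInf]
  exact le_trans (Nat.sInf_le hk) hkn

lemma sWaring_eq_of_mem {a : ZMod p} {n : ℕ} (hmem : n ∈ SW p a)
    (hlow : ∀ k ∈ SW p a, n ≤ k) : sWaring p 3 a = n := by
  rw [sWaring_eq_sInf]
  exact le_antisymm (Nat.sInf_le hmem) (le_csInf ⟨n, hmem⟩ hlow)

lemma gWaring_eq {n : ℕ} (hall : ∀ a : (ZMod p)ˣ, sWaring p 3 (a : ZMod p) ≤ n)
    (hex : ∃ a : (ZMod p)ˣ, sWaring p 3 (a : ZMod p) = n) : gWaring p 3 = n := by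
  obtain ⟨a, ha⟩ := hex
  unfold gWaring
  apply le_antisymm
  · refine csSup_le ⟨n, a, ha.symm⟩ ?_
    rintro s ⟨b, rfl⟩
    exact hall b
  · refine le_csSup ⟨n, ?_⟩ ⟨a, ha.symm⟩
    rintro s ⟨b, rfl⟩
    exact hall b

lemma exists_noncube (h3 : p % 3 = 1) (h7 : 7 ≤ p) :
    ∃ b : (ZMod p)ˣ, ¬ ∃ v : (ZMod p)ˣ, ((v : ZMod p)) ^ 3 = (b : ZMod p) := by
  obtain ⟨g, hg⟩ := IsCyclic.exists_generator (α := (ZMod p)ˣ)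
  have hord : orderOf g = p - 1 := by
    rw [orderOf_eq_card_of_forall_mem_zpowers hg, Nat.card_eq_fintype_card, ZMod.card_units]
  refine ⟨g, ?_⟩
  rintro ⟨v, hv⟩
  have hv' : v ^ 3 = g := by
    ext
    push_cast
    exact hv
  have hone : g ^ ((p - 1) / 3) = 1 := by
    rw [← hv', ← pow_mul]
    have hmul : 3 * ((p - 1) / 3) = p - 1 := Nat.mul_div_cancel' (by omega)
    rw [hmul, ← ZMod.card_units p]
    exact pow_card_eq_one
  have hdvd := orderOf_dvd_of_pow_eq_one hone
  rw [hord] at hdvd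
  have := Nat.le_of_dvd (by omega) hdvd
  omega

end AuxWaring

lemma gW_seven : gWaring 7 3 = 3 := by
  have htri : ∀ a : ZMod 7, a = 0 ∨ (∃ x : ZMod 7, x ≠ 0 ∧ x ^ 3 = a) ∨
      (∃ x y : ZMod 7, x ≠ 0 ∧ y ≠ 0 ∧ x ^ 3 + y ^ 3 = a) ∨
      (∃ x y z : ZMod 7, x ≠ 0 ∧ y ≠ 0 ∧ z ≠ 0 ∧ x ^ 3 + y ^ 3 + z ^ 3 = a) := by decide
  have h30 : (3 : ZMod 7) ≠ 0 := by decide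
  have hnc0 : ¬ ∃ x : ZMod 7, x ^ 3 = 3 := by decide
  have hn20 : ¬ ∃ x y : ZMod 7, x ≠ 0 ∧ y ≠ 0 ∧ x ^ 3 + y ^ 3 = 3 := by decide
  have h111 : (3 : ZMod 7) = ((1 : (ZMod 7)ˣ) : ZMod 7) ^ 3 + ((1 : (ZMod 7)ˣ) : ZMod 7) ^ 3
      + ((1 : (ZMod 7)ˣ) : ZMod 7) ^ 3 := by decide
  haveI : Fact (Nat.Prime 7) := ⟨by norm_num⟩
  apply gWaring_eq
  · intro a
    rcases htri (a : ZMod 7) with h0 | ⟨x, hx, hc⟩ | ⟨x, y, hx, hy, hc⟩ | ⟨x, y, z, hx, hy, hz, hc⟩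
    · exact absurd h0 (Units.ne_zero a)
    · exact sWaring_le_of_mem (one_mem_SW ⟨hx.isUnit.unit,
        by rw [hx.isUnit.unit_spec]; exact hc⟩) (by norm_num)
    · exact sWaring_le_of_mem (two_mem_SW ⟨hx.isUnit.unit, hy.isUnit.unit,
        by rw [hx.isUnit.unit_spec, hy.isUnit.unit_spec]; exact hc⟩) (by norm_num)
    · exact sWaring_le_of_mem (three_mem_SW ⟨hx.isUnit.unit, hy.isUnit.unit, hz.isUnit.unit,
        by rw [hx.isUnit.unit_spec, hy.isUnit.unit_spec, hz.isUnit.unit_spec]; exact hc⟩) le_rfl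
  · refine ⟨h30.isUnit.unit, ?_⟩
    rw [h30.isUnit.unit_spec]
    have hnc : ¬ ∃ v : (ZMod 7)ˣ, ((v : ZMod 7)) ^ 3 = 3 := by
      rintro ⟨v, hv⟩
      exact hnc0 ⟨v, hv⟩
    have hn2 : ¬ ∃ x y : (ZMod 7)ˣ, ((x : ZMod 7)) ^ 3 + ((y : ZMod 7)) ^ 3 = 3 := by
      rintro ⟨x, y, hxy⟩
      exact hn20 ⟨x, y, Units.ne_zero x, Units.ne_zero y, hxy⟩
    apply sWaring_eq_of_mem
    · exact three_mem_SW ⟨1, 1, 1, h111.symm⟩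
    · intro k hk
      have hk1 : 1 ≤ k := hk.1
      rcases Nat.lt_or_ge k 3 with hlt | hge
      · interval_cases k
        · exact absurd hk (one_not_mem_SW hnc)
        · exact absurd hk (two_not_mem_SW hn2)
      · exact hge

lemma gW_thirteen : gWaring 13 3 = 2 := by
  have htri : ∀ a : ZMod 13, a = 0 ∨ (∃ x : ZMod 13, x ≠ 0 ∧ x ^ 3 = a) ∨
      (∃ x y : ZMod 13, x ≠ 0 ∧ y ≠ 0 ∧ x ^ 3 + y ^ 3 = a) := by decide
  have h20 : (2 : ZMod 13) ≠ 0 := by decide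
  have hnc0 : ¬ ∃ x : ZMod 13, x ^ 3 = 2 := by decide
  have h11 : (2 : ZMod 13) = ((1 : (ZMod 13)ˣ) : ZMod 13) ^ 3
      + ((1 : (ZMod 13)ˣ) : ZMod 13) ^ 3 := by decide
  haveI : Fact (Nat.Prime 13) := ⟨by norm_num⟩
  apply gWaring_eq
  · intro a
    rcases htri (a : ZMod 13) with h0 | ⟨x, hx, hc⟩ | ⟨x, y, hx, hy, hc⟩
    · exact absurd h0 (Units.ne_zero a)
    · exact sWaring_le_of_mem (one_mem_SW ⟨hx.isUnit.unit,
        by rw [hx.isUnit.unit_spec]; exact hc⟩) (by norm_num)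
    · exact sWaring_le_of_mem (two_mem_SW ⟨hx.isUnit.unit, hy.isUnit.unit,
        by rw [hx.isUnit.unit_spec, hy.isUnit.unit_spec]; exact hc⟩) le_rfl
  · refine ⟨h20.isUnit.unit, ?_⟩
    rw [h20.isUnit.unit_spec]
    have hnc : ¬ ∃ v : (ZMod 13)ˣ, ((v : ZMod 13)) ^ 3 = 2 := by
      rintro ⟨v, hv⟩
      exact hnc0 ⟨v, hv⟩
    apply sWaring_eq_of_mem
    · exact two_mem_SW ⟨1, 1, h11.symm⟩
    · intro k hk
      have hk1 : 1 ≤ k := hk.1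
      rcases Nat.lt_or_ge k 2 with hlt | hge
      · interval_cases k
        exact absurd hk (one_not_mem_SW hnc)
      · exact hge

/-- Theorem 4: for a prime `p ≡ 1 mod 3`, `g_3(p) = 3` if `p = 7`
and `g_3(p) = 2` otherwise. -/
theorem gWaring_three (p : ℕ) (hp : p.Prime) (h3 : p % 3 = 1) :
    gWaring p 3 = if p = 7 then 3 else 2 := by
  by_cases h7 : p = 7
  · subst h7
    rw [if_pos rfl]
    exact gW_seven
  · rw [if_neg h7]
    by_cases h13 : p = 13
    · subst h13
      exact gW_thirteen
    · haveI : Fact p.Prime := ⟨hp⟩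
      have hbig : 17 ≤ p := by
        by_contra hlt
        push_neg at hlt
        have h2 := hp.two_le
        interval_cases p <;> first | omega | exact absurd hp (by norm_num)
      apply gWaring_eq
      · intro a
        exact sWaring_le_of_mem (two_mem_SW (exists_two_cubes h3 hbig (Units.ne_zero a))) le_rfl
      · obtain ⟨b, hb⟩ := exists_noncube h3 (by omega)
        refine ⟨b, ?_⟩
        apply sWaring_eq_of_mem
        · exact two_mem_SW (exists_two_cubes h3 hbig (Units.ne_zero b))
        · intro k hk
          have hk1 : 1 ≤ k := hk.1
          rcases Nat.lt_or_ge k 2 with hlt | hge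
          · interval_cases k
            exact absurd hk (one_not_mem_SW hb)
          · exact hge
end

section
/- (Theorem 5) Let p be a prime with p ≡ 1 mod 4. Then g_4(p) = 4 if p = 5; g_4(p) = 3 if p ∈ {13, 17, 29}; and g_4(p) = 2 for every other such prime p. -/
open Finset

section Aux

open Finset MulChar

variable {p : ℕ} [Fact p.Prime]

/-- Membership in the defining set of `sWaring` in terms of nonzero field elements. -/
lemma repTuple_iff {k : ℕ} {a : ZMod p} :
    (∃ u : Fin k → (ZMod p)ˣ, a = ∑ i, ((u i : ZMod p)) ^ 4) ↔
      ∃ v : Fin k → ZMod p, (∀ i, v i ≠ 0) ∧ a = ∑ i, (v i) ^ 4 := by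
  constructor
  · rintro ⟨u, rfl⟩
    exact ⟨fun i => (u i : ZMod p), fun i => Units.ne_zero _, rfl⟩
  · rintro ⟨v, hv, rfl⟩
    refine ⟨fun i => (isUnit_iff_ne_zero.mpr (hv i)).unit, ?_⟩
    simp [IsUnit.unit_spec]

lemma rep1_iff {a : ZMod p} :
    (∃ u : Fin 1 → (ZMod p)ˣ, a = ∑ i, ((u i : ZMod p)) ^ 4) ↔
      ∃ x : ZMod p, x ≠ 0 ∧ a = x ^ 4 := by
  rw [repTuple_iff]
  constructor
  · rintro ⟨v, hv, rfl⟩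
    exact ⟨v 0, hv 0, by simp [Fin.sum_univ_one]⟩
  · rintro ⟨x, hx, rfl⟩
    exact ⟨fun _ => x, fun _ => hx, by simp [Fin.sum_univ_one]⟩

lemma rep2_iff {a : ZMod p} :
    (∃ u : Fin 2 → (ZMod p)ˣ, a = ∑ i, ((u i : ZMod p)) ^ 4) ↔
      ∃ x y : ZMod p, x ≠ 0 ∧ y ≠ 0 ∧ a = x ^ 4 + y ^ 4 := by
  rw [repTuple_iff]
  constructor
  · rintro ⟨v, hv, rfl⟩
    exact ⟨v 0, v 1, hv 0, hv 1, by simp [Fin.sum_univ_two]⟩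
  · rintro ⟨x, y, hx, hy, rfl⟩
    refine ⟨![x, y], fun i => ?_, by simp [Fin.sum_univ_two]⟩
    fin_cases i <;> simpa

lemma rep3_iff {a : ZMod p} :
    (∃ u : Fin 3 → (ZMod p)ˣ, a = ∑ i, ((u i : ZMod p)) ^ 4) ↔
      ∃ x y z : ZMod p, x ≠ 0 ∧ y ≠ 0 ∧ z ≠ 0 ∧ a = x ^ 4 + y ^ 4 + z ^ 4 := by
  rw [repTuple_iff]
  constructor
  · rintro ⟨v, hv, rfl⟩
    exact ⟨v 0, v 1, v 2, hv 0, hv 1, hv 2, by simp [Fin.sum_univ_three]⟩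
  · rintro ⟨x, y, z, hx, hy, hz, rfl⟩
    refine ⟨![x, y, z], fun i => ?_, by simp [Fin.sum_univ_three]⟩
    fin_cases i <;> simpa

lemma rep4_iff {a : ZMod p} :
    (∃ u : Fin 4 → (ZMod p)ˣ, a = ∑ i, ((u i : ZMod p)) ^ 4) ↔
      ∃ x y z w : ZMod p, x ≠ 0 ∧ y ≠ 0 ∧ z ≠ 0 ∧ w ≠ 0 ∧ a = x ^ 4 + y ^ 4 + z ^ 4 + w ^ 4 := by
  rw [repTuple_iff]
  constructor
  · rintro ⟨v, hv, rfl⟩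
    exact ⟨v 0, v 1, v 2, v 3, hv 0, hv 1, hv 2, hv 3, by
      simp [Fin.sum_univ_four]⟩
  · rintro ⟨x, y, z, w, hx, hy, hz, hw, rfl⟩
    refine ⟨![x, y, z, w], fun i => ?_, by simp [Fin.sum_univ_four]⟩
    fin_cases i <;> simpa

lemma sWaring_le_of {a : ZMod p} {k : ℕ} (hk : 1 ≤ k)
    (h : ∃ u : Fin k → (ZMod p)ˣ, a = ∑ i, ((u i : ZMod p)) ^ 4) :
    sWaring p 4 a ≤ k :=
  Nat.sInf_le ⟨hk, h⟩

lemma sWaring_eq_of {a : ZMod p} {k : ℕ} (hk : 1 ≤ k)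
    (h : ∃ u : Fin k → (ZMod p)ˣ, a = ∑ i, ((u i : ZMod p)) ^ 4)
    (hmin : ∀ j, 1 ≤ j → j < k → ¬ ∃ u : Fin j → (ZMod p)ˣ, a = ∑ i, ((u i : ZMod p)) ^ 4) :
    sWaring p 4 a = k := by
  refine le_antisymm (sWaring_le_of hk h) (le_csInf ⟨k, hk, h⟩ ?_)
  rintro b ⟨hb1, hb2⟩
  by_contra hlt
  exact hmin b hb1 (by omega) hb2

lemma gWaring_eq_of {m : ℕ} (hall : ∀ a : (ZMod p)ˣ, sWaring p 4 (a : ZMod p) ≤ m)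
    (hex : ∃ a : (ZMod p)ˣ, sWaring p 4 (a : ZMod p) = m) :
    gWaring p 4 = m := by
  obtain ⟨a₀, ha₀⟩ := hex
  refine le_antisymm (csSup_le ⟨_, ⟨a₀, rfl⟩⟩ ?_) (le_csSup ⟨m, ?_⟩ ⟨a₀, ha₀.symm⟩)
  · rintro s ⟨a, rfl⟩; exact hall a
  · rintro s ⟨a, rfl⟩; exact hall a

/-- A multiplicative character of order 4 detects fourth powers. -/
lemma exists_fourth_root_of_char {χ : MulChar (ZMod p) ℂ} (hχ : orderOf χ = 4)
    {x : ZMod p} (hx : x ≠ 0) (h1 : χ x = 1) :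
    ∃ u : (ZMod p)ˣ, ((u : ZMod p)) ^ 4 = x := by
  obtain ⟨g, hg⟩ := IsCyclic.exists_generator (α := (ZMod p)ˣ)
  have hgen : ∀ y : (ZMod p)ˣ, ∃ k : ℕ, g ^ k = y := by
    intro y
    exact (mem_powers_iff_mem_zpowers.mpr (hg y)).imp (fun k hk => hk)
  have hord4 : ∀ m : ℕ, (χ (g : ZMod p)) ^ m = 1 → 4 ∣ m := by
    intro m hm
    have : χ ^ m = 1 := by
      rw [MulChar.eq_iff hg, MulChar.pow_apply_coe, MulChar.one_apply_coe, hm]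
    exact hχ ▸ orderOf_dvd_of_pow_eq_one this
  obtain ⟨k, hk⟩ := hgen (isUnit_iff_ne_zero.mpr hx).unit
  have hxg : ((g : ZMod p)) ^ k = x := by
    rw [← Units.val_pow_eq_pow_val, hk, IsUnit.unit_spec]
  have h4k : 4 ∣ k := by
    apply hord4
    rw [← map_pow, hxg, h1]
  obtain ⟨m, rfl⟩ := h4k
  exact ⟨g ^ m, by rw [← hxg, Units.val_pow_eq_pow_val, ← pow_mul, mul_comm]⟩

/-- If the character sum `∑_{j<4} χ^j(x)` is nonzero, then `x` is a fourth power of a unit. -/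
lemma exists_fourth_root_of_sum_ne_zero {χ : MulChar (ZMod p) ℂ} (hχ : orderOf χ = 4)
    {x : ZMod p} (hx : (∑ j ∈ Finset.range 4, (χ ^ j) x) ≠ 0) :
    ∃ u : (ZMod p)ˣ, ((u : ZMod p)) ^ 4 = x := by
  have hx0 : x ≠ 0 := by
    rintro rfl
    apply hx
    refine Finset.sum_eq_zero fun j _ => ?_
    exact MulChar.map_nonunit _ (by simp)
  have hxu : IsUnit x := isUnit_iff_ne_zero.mpr hx0
  have hpow : ∀ j : ℕ, (χ ^ j) x = (χ x) ^ j := fun j => by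
    conv_lhs => rw [← hxu.unit_spec]
    rw [MulChar.pow_apply_coe, hxu.unit_spec]
  have hsum : ∑ j ∈ Finset.range 4, (χ ^ j) x = ∑ j ∈ Finset.range 4, (χ x) ^ j := by
    exact Finset.sum_congr rfl fun j _ => hpow j
  have h1 : χ x = 1 := by
    by_contra hne
    apply hx
    rw [hsum, geom_sum_eq hne]
    have h44 : χ ^ 4 = 1 := by rw [← hχ]; exact pow_orderOf_eq_one χ
    have : (χ x) ^ 4 = 1 := by
      rw [← hpow 4, h44]
      conv_lhs => rw [← hxu.unit_spec]
      rw [MulChar.one_apply_coe]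
    rw [this, sub_self, zero_div]
  exact exists_fourth_root_of_char hχ hx0 h1

/-- Every unit has trivial value under `χ` of order 4 iff it's a fourth power; existence of
a non-fourth-power. -/
lemma exists_not_fourth_power (h4 : p % 4 = 1) :
    ∃ a : (ZMod p)ˣ, ¬ ∃ u : (ZMod p)ˣ, ((u : ZMod p)) ^ 4 = (a : ZMod p) := by
  have hdvd : 4 ∣ Fintype.card (ZMod p) - 1 := by
    rw [ZMod.card p]
    have := (Fact.out : p.Prime).two_le
    omega
  obtain ⟨χ, hχ⟩ := MulChar.exists_mulChar_orderOf (ZMod p) hdvd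
    (Complex.isPrimitiveRoot_exp 4 (by norm_num))
  by_contra h
  push_neg at h
  have : χ = 1 := by
    ext1 a
    obtain ⟨u, hu⟩ := h a
    rw [MulChar.one_apply_coe, ← hu, map_pow]
    have h2 : (χ ↑u) ^ 4 = (χ ^ 4) ↑u := (MulChar.pow_apply_coe χ 4 u).symm
    have h44 : χ ^ 4 = 1 := by rw [← hχ]; exact pow_orderOf_eq_one χ
    rw [h2, h44, MulChar.one_apply_coe]
  rw [this, orderOf_one] at hχ
  norm_num at hχ

/-- Twisted Jacobi sum evaluation. -/
lemma sum_mulChar_mul_eq (φ ψ : MulChar (ZMod p) ℂ) {a : ZMod p} (ha : a ≠ 0) :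
    ∑ x : ZMod p, φ x * ψ (a - x) = φ a * ψ a * jacobiSum φ ψ := by
  rw [jacobiSum, Finset.mul_sum]
  refine Fintype.sum_bijective (fun x : ZMod p => a⁻¹ * x)
    (mulLeft_bijective₀ a⁻¹ (inv_ne_zero ha)) _ _ fun x => ?_
  have e1 : φ a * φ (a⁻¹ * x) = φ x := by
    rw [← map_mul]; congr 1; field_simp
  have e2 : ψ a * ψ (1 - a⁻¹ * x) = ψ (a - x) := by
    rw [← map_mul]; congr 1; field_simp
  rw [mul_mul_mul_comm, e1, e2]

lemma abs_jacobiSum_eq_sqrt {φ ψ : MulChar (ZMod p) ℂ} (hφ : φ ≠ 1) (hψ : ψ ≠ 1)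
    (hφψ : φ * ψ ≠ 1) : ‖jacobiSum φ ψ‖ = Real.sqrt p := by
  have hchar : ringChar ℂ ≠ ringChar (ZMod p) := by
    rw [ringChar.eq_zero, ZMod.ringChar_zmod_n]
    exact fun h => (Fact.out : p.Prime).ne_zero h.symm
  have hkey := jacobiSum_mul_jacobiSum_inv hchar hφ hψ hφψ
  have hconj : jacobiSum φ⁻¹ ψ⁻¹ = starRingEnd ℂ (jacobiSum φ ψ) := by
    rw [jacobiSum, jacobiSum, map_sum]
    refine Finset.sum_congr rfl fun x _ => ?_
    rw [map_mul, starRingEnd_apply, starRingEnd_apply, MulChar.star_apply', MulChar.star_apply']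
  rw [hconj] at hkey
  have h1 : (Complex.normSq (jacobiSum φ ψ) : ℂ) = (p : ℂ) := by
    rw [← Complex.mul_conj, hkey, ZMod.card]
  have h2 : Complex.normSq (jacobiSum φ ψ) = (p : ℝ) := by exact_mod_cast h1
  rw [Complex.norm_def, h2]

/-- Key analytic step: for `p ≥ 61`, every nonzero `a` is a sum of two nonzero 4th powers. -/
lemma two_rep (h4 : p % 4 = 1) (hp61 : 61 ≤ p) {a : ZMod p} (ha : a ≠ 0) :
    ∃ x y : ZMod p, x ≠ 0 ∧ y ≠ 0 ∧ a = x ^ 4 + y ^ 4 := by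
  have hdvd : 4 ∣ Fintype.card (ZMod p) - 1 := by
    rw [ZMod.card p]
    have := (Fact.out : p.Prime).two_le
    omega
  obtain ⟨χ, hχ⟩ := MulChar.exists_mulChar_orderOf (ZMod p) hdvd
    (Complex.isPrimitiveRoot_exp 4 (by norm_num))
  have hunit : IsUnit a := isUnit_iff_ne_zero.mpr ha
  -- the character sum value at units has absolute value 1
  have habs : ∀ (φ : MulChar (ZMod p) ℂ) (b : ZMod p), b ≠ 0 → ‖φ b‖ = 1 := by
    intro φ b hb
    have hbu : IsUnit b := isUnit_iff_ne_zero.mpr hb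
    have h1 := MulChar.apply_mem_rootsOfUnity (R := ZMod p) hbu.unit (χ := φ)
    have h2 := Complex.norm_eq_one_of_mem_rootsOfUnity h1
    rwa [MulChar.coe_equivToUnitHom, hbu.unit_spec] at h2
  -- nontriviality of powers
  have hne1 : ∀ j, 0 < j → j < 4 → χ ^ j ≠ 1 := by
    intro j hj0 hj4 h1
    have := orderOf_dvd_of_pow_eq_one h1
    rw [hχ] at this
    omega
  -- the terms
  set t : ℕ × ℕ → ℂ := fun q =>
    (χ ^ q.1) a * (χ ^ q.2) a * jacobiSum (χ ^ q.1) (χ ^ q.2) with ht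
  have habst : ∀ q : ℕ × ℕ, ‖t q‖ = ‖jacobiSum (χ ^ q.1) (χ ^ q.2)‖ := by
    intro q
    rw [ht]
    simp only [norm_mul, habs _ _ ha, one_mul]
  -- individual bounds
  have hA : ∀ k, 0 < k → k < 4 → ‖t (0, k)‖ ≤ 1 := by
    intro k h0 h4'
    rw [habst]
    simp only [pow_zero]
    rw [jacobiSum_one_nontrivial (hne1 k h0 h4')]
    simp
  have hA' : ∀ j, 0 < j → j < 4 → ‖t (j, 0)‖ ≤ 1 := by
    intro j h0 h4'
    rw [habst]
    simp only [pow_zero]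
    rw [jacobiSum_comm, jacobiSum_one_nontrivial (hne1 j h0 h4')]
    simp
  have hB : ∀ j k, 0 < j → 0 < k → j + k = 4 → ‖t (j, k)‖ ≤ 1 := by
    intro j k hj0 hk0 hjk
    rw [habst]
    have hjk4 : j < 4 := by omega
    have hinv : χ ^ k = (χ ^ j)⁻¹ := by
      refine eq_inv_of_mul_eq_one_left ?_
      rw [← pow_add, show k + j = 4 by omega, ← hχ, pow_orderOf_eq_one]
    rw [hinv, jacobiSum_nontrivial_inv (hne1 j hj0 hjk4)]
    rw [norm_neg]
    rw [habs _ _ (by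
      intro h0
      exact one_ne_zero (by rw [← neg_neg (1 : ZMod p), h0, neg_zero]))]
  have hC : ∀ j k, 0 < j → j < 4 → 0 < k → k < 4 → j + k ≠ 4 →
      ‖t (j, k)‖ ≤ Real.sqrt p := by
    intro j k hj0 hj4 hk0 hk4 hjk
    rw [habst]
    refine le_of_eq (abs_jacobiSum_eq_sqrt (hne1 j hj0 hj4) (hne1 k hk0 hk4) ?_)
    rw [← pow_add]
    intro h1
    have := orderOf_dvd_of_pow_eq_one h1
    rw [hχ] at this
    omega
  -- the total sum
  set S : ℂ := ∑ x : ZMod p,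
    (∑ j ∈ range 4, (χ ^ j) x) * (∑ k ∈ range 4, (χ ^ k) (a - x)) with hS
  have hS2 : S = ∑ q ∈ range 4 ×ˢ range 4, t q := by
    rw [hS, Finset.sum_product]
    simp_rw [Finset.sum_mul_sum]
    rw [Finset.sum_comm]
    refine Finset.sum_congr rfl fun j _ => ?_
    rw [Finset.sum_comm]
    refine Finset.sum_congr rfl fun k _ => ?_
    exact sum_mulChar_mul_eq _ _ ha
  have hmem00 : ((0, 0) : ℕ × ℕ) ∈ range 4 ×ˢ range 4 := by decide
  have hS3 : S = t (0, 0) + ∑ q ∈ (range 4 ×ˢ range 4).erase (0, 0), t q :=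
    hS2.trans (Finset.add_sum_erase _ t hmem00).symm
  have h00 : t (0, 0) = (p : ℂ) - 2 := by
    rw [ht]
    simp only [pow_zero]
    rw [MulChar.one_apply hunit, jacobiSum_one_one, one_mul, one_mul, ZMod.card]
  -- split the error set
  have hE : (range 4 ×ˢ range 4).erase (0, 0) =
      ({(0, 1), (0, 2), (0, 3), (1, 0), (2, 0), (3, 0), (1, 3), (2, 2), (3, 1)} : Finset (ℕ × ℕ))
      ∪ ({(1, 1), (1, 2), (2, 1), (2, 3), (3, 2), (3, 3)} : Finset (ℕ × ℕ)) := by decide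
  have hdisj : Disjoint
      ({(0, 1), (0, 2), (0, 3), (1, 0), (2, 0), (3, 0), (1, 3), (2, 2), (3, 1)} : Finset (ℕ × ℕ))
      ({(1, 1), (1, 2), (2, 1), (2, 3), (3, 2), (3, 3)} : Finset (ℕ × ℕ)) := by decide
  have hR : ‖∑ q ∈ (range 4 ×ˢ range 4).erase (0, 0), t q‖
      ≤ 9 + 6 * Real.sqrt p := by
    rw [hE, Finset.sum_union hdisj]
    refine (norm_add_le _ _).trans ?_
    have hsqrt1 : (1 : ℝ) ≤ Real.sqrt p := by
      rw [show (1 : ℝ) = Real.sqrt 1 by simp]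
      exact Real.sqrt_le_sqrt (by exact_mod_cast by omega : (1 : ℝ) ≤ (p : ℝ))
    have b1 : ‖∑ q ∈ ({(0, 1), (0, 2), (0, 3), (1, 0), (2, 0), (3, 0), (1, 3),
        (2, 2), (3, 1)} : Finset (ℕ × ℕ)), t q‖ ≤ 9 := by
      refine (norm_sum_le _ _).trans ?_
      have : ∀ q ∈ ({(0, 1), (0, 2), (0, 3), (1, 0), (2, 0), (3, 0), (1, 3),
          (2, 2), (3, 1)} : Finset (ℕ × ℕ)), ‖t q‖ ≤ 1 := by
        intro q hq
        fin_cases hq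
        · exact hA 1 (by norm_num) (by norm_num)
        · exact hA 2 (by norm_num) (by norm_num)
        · exact hA 3 (by norm_num) (by norm_num)
        · exact hA' 1 (by norm_num) (by norm_num)
        · exact hA' 2 (by norm_num) (by norm_num)
        · exact hA' 3 (by norm_num) (by norm_num)
        · exact hB 1 3 (by norm_num) (by norm_num) (by norm_num)
        · exact hB 2 2 (by norm_num) (by norm_num) (by norm_num)
        · exact hB 3 1 (by norm_num) (by norm_num) (by norm_num)
      refine (Finset.sum_le_sum this).trans ?_
      simp
    have b2 : ‖∑ q ∈ ({(1, 1), (1, 2), (2, 1), (2, 3), (3, 2),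
        (3, 3)} : Finset (ℕ × ℕ)), t q‖ ≤ 6 * Real.sqrt p := by
      refine (norm_sum_le _ _).trans ?_
      have hle : ∀ q ∈ ({(1, 1), (1, 2), (2, 1), (2, 3), (3, 2),
          (3, 3)} : Finset (ℕ × ℕ)), ‖t q‖ ≤ Real.sqrt p := by
        intro q hq
        fin_cases hq
        · exact hC 1 1 (by norm_num) (by norm_num) (by norm_num) (by norm_num) (by norm_num)
        · exact hC 1 2 (by norm_num) (by norm_num) (by norm_num) (by norm_num) (by norm_num)
        · exact hC 2 1 (by norm_num) (by norm_num) (by norm_num) (by norm_num) (by norm_num)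
        · exact hC 2 3 (by norm_num) (by norm_num) (by norm_num) (by norm_num) (by norm_num)
        · exact hC 3 2 (by norm_num) (by norm_num) (by norm_num) (by norm_num) (by norm_num)
        · exact hC 3 3 (by norm_num) (by norm_num) (by norm_num) (by norm_num) (by norm_num)
      refine (Finset.sum_le_sum hle).trans ?_
      rw [Finset.sum_const, nsmul_eq_mul]
      have hc : (({(1, 1), (1, 2), (2, 1), (2, 3), (3, 2),
          (3, 3)} : Finset (ℕ × ℕ)).card) = 6 := by decide
      rw [hc]
      norm_num
    linarith
  -- S is nonzero
  have hSne : S ≠ 0 := by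
    intro h0
    rw [hS3, h00] at h0
    have hReq : ‖∑ q ∈ (range 4 ×ˢ range 4).erase (0, 0), t q‖
        = ‖(p : ℂ) - 2‖ := by
      rw [show (∑ q ∈ (range 4 ×ˢ range 4).erase (0, 0), t q) = -((p : ℂ) - 2) by
        linear_combination h0]
      rw [norm_neg]
    have habsp : ‖(p : ℂ) - 2‖ = (p : ℝ) - 2 := by
      rw [show ((p : ℂ) - 2) = (((p : ℝ) - 2 : ℝ) : ℂ) by push_cast; ring,
        Complex.norm_real, Real.norm_eq_abs]
      have : (61 : ℝ) ≤ (p : ℝ) := by exact_mod_cast hp61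
      rw [abs_of_nonneg (by linarith)]
    rw [hReq, habsp] at hR
    have hs : Real.sqrt p ^ 2 = (p : ℝ) := Real.sq_sqrt (by positivity)
    have hs0 : (0 : ℝ) ≤ Real.sqrt p := Real.sqrt_nonneg _
    have hp' : (61 : ℝ) ≤ (p : ℝ) := by exact_mod_cast hp61
    nlinarith [sq_nonneg (Real.sqrt p - 6)]
  -- extract representation
  obtain ⟨x, -, hterm⟩ := Finset.exists_ne_zero_of_sum_ne_zero hSne
  obtain ⟨hf1, hf2⟩ := mul_ne_zero_iff.mp hterm
  obtain ⟨u, hu⟩ := exists_fourth_root_of_sum_ne_zero hχ hf1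
  obtain ⟨v, hv⟩ := exists_fourth_root_of_sum_ne_zero hχ hf2
  refine ⟨(u : ZMod p), (v : ZMod p), Units.ne_zero u, Units.ne_zero v, ?_⟩
  rw [hu, hv]
  ring


lemma gWaring_eq_three_of (a₀ : ZMod p) (ha₀ : a₀ ≠ 0)
    (hall : ∀ b : ZMod p, b ≠ 0 →
      ((∃ x : ZMod p, x ≠ 0 ∧ b = x ^ 4) ∨
       (∃ x y : ZMod p, x ≠ 0 ∧ y ≠ 0 ∧ b = x ^ 4 + y ^ 4) ∨
       (∃ x y z : ZMod p, x ≠ 0 ∧ y ≠ 0 ∧ z ≠ 0 ∧ b = x ^ 4 + y ^ 4 + z ^ 4)))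
    (h1 : ¬ ∃ x : ZMod p, x ≠ 0 ∧ a₀ = x ^ 4)
    (h2 : ¬ ∃ x y : ZMod p, x ≠ 0 ∧ y ≠ 0 ∧ a₀ = x ^ 4 + y ^ 4) :
    gWaring p 4 = 3 := by
  have hu : IsUnit a₀ := isUnit_iff_ne_zero.mpr ha₀
  refine gWaring_eq_of (fun a => ?_) ⟨hu.unit, ?_⟩
  · rcases hall _ (Units.ne_zero a) with h' | h' | h'
    · exact (sWaring_le_of (by norm_num) (rep1_iff.mpr h')).trans (by norm_num)
    · exact (sWaring_le_of (by norm_num) (rep2_iff.mpr h')).trans (by norm_num)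
    · exact sWaring_le_of (by norm_num) (rep3_iff.mpr h')
  · rw [hu.unit_spec]
    have h3 : ∃ x y z : ZMod p, x ≠ 0 ∧ y ≠ 0 ∧ z ≠ 0 ∧ a₀ = x ^ 4 + y ^ 4 + z ^ 4 := by
      rcases hall _ ha₀ with h' | h' | h'
      · exact absurd h' h1
      · exact absurd h' h2
      · exact h'
    refine sWaring_eq_of (by norm_num) (rep3_iff.mpr h3) (fun j hj1 hj2 => ?_)
    have hj : j = 1 ∨ j = 2 := by omega
    rcases hj with rfl | rfl
    · rw [rep1_iff]; exact h1
    · rw [rep2_iff]; exact h2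

lemma gWaring_eq_two_of (h4 : p % 4 = 1)
    (hall : ∀ b : ZMod p, b ≠ 0 →
      ((∃ x : ZMod p, x ≠ 0 ∧ b = x ^ 4) ∨
       (∃ x y : ZMod p, x ≠ 0 ∧ y ≠ 0 ∧ b = x ^ 4 + y ^ 4))) :
    gWaring p 4 = 2 := by
  obtain ⟨a₀, ha₀⟩ := exists_not_fourth_power (p := p) h4
  have hnot1 : ¬ ∃ x : ZMod p, x ≠ 0 ∧ (a₀ : ZMod p) = x ^ 4 := by
    rintro ⟨x, hx, hxe⟩
    exact ha₀ ⟨(isUnit_iff_ne_zero.mpr hx).unit, by rw [IsUnit.unit_spec]; exact hxe.symm⟩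
  have h2 : ∃ x y : ZMod p, x ≠ 0 ∧ y ≠ 0 ∧ (a₀ : ZMod p) = x ^ 4 + y ^ 4 := by
    rcases hall _ (Units.ne_zero a₀) with h' | h'
    · exact absurd h' hnot1
    · exact h'
  refine gWaring_eq_of (fun a => ?_) ⟨a₀, ?_⟩
  · rcases hall _ (Units.ne_zero a) with h' | h'
    · exact (sWaring_le_of (by norm_num) (rep1_iff.mpr h')).trans (by norm_num)
    · exact sWaring_le_of (by norm_num) (rep2_iff.mpr h')
  · refine sWaring_eq_of (by norm_num) (rep2_iff.mpr h2) (fun j hj1 hj2 => ?_)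
    have hj : j = 1 := by omega
    subst hj
    rw [rep1_iff]
    exact hnot1

end Aux


private lemma zmod5_all : ∀ b : ZMod 5, b ≠ 0 →
    ((∃ x : ZMod 5, x ≠ 0 ∧ b = x ^ 4) ∨
     (∃ x y : ZMod 5, x ≠ 0 ∧ y ≠ 0 ∧ b = x ^ 4 + y ^ 4) ∨
     (∃ x y z : ZMod 5, x ≠ 0 ∧ y ≠ 0 ∧ z ≠ 0 ∧ b = x ^ 4 + y ^ 4 + z ^ 4) ∨
     (∃ x y z w : ZMod 5, x ≠ 0 ∧ y ≠ 0 ∧ z ≠ 0 ∧ w ≠ 0 ∧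
       b = x ^ 4 + y ^ 4 + z ^ 4 + w ^ 4)) := by decide

private lemma zmod5_ne : (4 : ZMod 5) ≠ 0 := by decide

private lemma zmod5_rep4 : ∃ x y z w : ZMod 5, x ≠ 0 ∧ y ≠ 0 ∧ z ≠ 0 ∧ w ≠ 0 ∧
    (4 : ZMod 5) = x ^ 4 + y ^ 4 + z ^ 4 + w ^ 4 := ⟨1, 1, 1, 1, by decide⟩

private lemma zmod5_not1 : ¬ ∃ x : ZMod 5, x ≠ 0 ∧ (4 : ZMod 5) = x ^ 4 := by decide
private lemma zmod5_not2 : ¬ ∃ x y : ZMod 5, x ≠ 0 ∧ y ≠ 0 ∧ (4 : ZMod 5) = x ^ 4 + y ^ 4 := by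
  decide
private lemma zmod5_not3 : ¬ ∃ x y z : ZMod 5, x ≠ 0 ∧ y ≠ 0 ∧ z ≠ 0 ∧
    (4 : ZMod 5) = x ^ 4 + y ^ 4 + z ^ 4 := by decide


private lemma zmod13_all : ∀ b : ZMod 13, b ≠ 0 →
    ((∃ x : ZMod 13, x ≠ 0 ∧ b = x ^ 4) ∨
     (∃ x y : ZMod 13, x ≠ 0 ∧ y ≠ 0 ∧ b = x ^ 4 + y ^ 4) ∨
     (∃ x y z : ZMod 13, x ≠ 0 ∧ y ≠ 0 ∧ z ≠ 0 ∧ b = x ^ 4 + y ^ 4 + z ^ 4)) := by decide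
private lemma zmod13_ne : (7 : ZMod 13) ≠ 0 := by decide
private lemma zmod13_not1 : ¬ ∃ x : ZMod 13, x ≠ 0 ∧ (7 : ZMod 13) = x ^ 4 := by decide
private lemma zmod13_not2 :
    ¬ ∃ x y : ZMod 13, x ≠ 0 ∧ y ≠ 0 ∧ (7 : ZMod 13) = x ^ 4 + y ^ 4 := by decide

private lemma zmod17_all : ∀ b : ZMod 17, b ≠ 0 →
    ((∃ x : ZMod 17, x ≠ 0 ∧ b = x ^ 4) ∨
     (∃ x y : ZMod 17, x ≠ 0 ∧ y ≠ 0 ∧ b = x ^ 4 + y ^ 4) ∨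
     (∃ x y z : ZMod 17, x ≠ 0 ∧ y ≠ 0 ∧ z ≠ 0 ∧ b = x ^ 4 + y ^ 4 + z ^ 4)) := by decide
private lemma zmod17_ne : (6 : ZMod 17) ≠ 0 := by decide
private lemma zmod17_not1 : ¬ ∃ x : ZMod 17, x ≠ 0 ∧ (6 : ZMod 17) = x ^ 4 := by decide
private lemma zmod17_not2 :
    ¬ ∃ x y : ZMod 17, x ≠ 0 ∧ y ≠ 0 ∧ (6 : ZMod 17) = x ^ 4 + y ^ 4 := by decide

private lemma zmod29_all : ∀ b : ZMod 29, b ≠ 0 →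
    ((∃ x : ZMod 29, x ≠ 0 ∧ b = x ^ 4) ∨
     (∃ x y : ZMod 29, x ≠ 0 ∧ y ≠ 0 ∧ b = x ^ 4 + y ^ 4) ∨
     (∃ x y z : ZMod 29, x ≠ 0 ∧ y ≠ 0 ∧ z ≠ 0 ∧ b = x ^ 4 + y ^ 4 + z ^ 4)) := by decide
private lemma zmod29_ne : (4 : ZMod 29) ≠ 0 := by decide
private lemma zmod29_not1 : ¬ ∃ x : ZMod 29, x ≠ 0 ∧ (4 : ZMod 29) = x ^ 4 := by decide
private lemma zmod29_not2 :
    ¬ ∃ x y : ZMod 29, x ≠ 0 ∧ y ≠ 0 ∧ (4 : ZMod 29) = x ^ 4 + y ^ 4 := by decide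

set_option maxRecDepth 10000 in
private lemma zmod37_all : ∀ b : ZMod 37, b ≠ 0 →
    ((∃ x : ZMod 37, x ≠ 0 ∧ b = x ^ 4) ∨
     (∃ x y : ZMod 37, x ≠ 0 ∧ y ≠ 0 ∧ b = x ^ 4 + y ^ 4)) := by decide
set_option maxRecDepth 10000 in
private lemma zmod41_all : ∀ b : ZMod 41, b ≠ 0 →
    ((∃ x : ZMod 41, x ≠ 0 ∧ b = x ^ 4) ∨
     (∃ x y : ZMod 41, x ≠ 0 ∧ y ≠ 0 ∧ b = x ^ 4 + y ^ 4)) := by decide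
set_option maxRecDepth 10000 in
private lemma zmod53_all : ∀ b : ZMod 53, b ≠ 0 →
    ((∃ x : ZMod 53, x ≠ 0 ∧ b = x ^ 4) ∨
     (∃ x y : ZMod 53, x ≠ 0 ∧ y ≠ 0 ∧ b = x ^ 4 + y ^ 4)) := by decide

/-- Theorem 5: for a prime `p ≡ 1 mod 4`, `g_4(p) = 4` if `p = 5`,
`g_4(p) = 3` if `p ∈ {13, 17, 29}`, and `g_4(p) = 2` otherwise. -/
theorem gWaring_four (p : ℕ) (hp : p.Prime) (h4 : p % 4 = 1) :
    gWaring p 4 = if p = 5 then 4 else if p = 13 ∨ p = 17 ∨ p = 29 then 3 else 2 := by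
  have : Fact p.Prime := ⟨hp⟩
  by_cases h5 : p = 5
  · subst h5
    rw [if_pos rfl]
    have hu : IsUnit (4 : ZMod 5) := isUnit_iff_ne_zero.mpr zmod5_ne
    refine gWaring_eq_of (fun a => ?_) ⟨hu.unit, ?_⟩
    · have ha : (a : ZMod 5) ≠ 0 := Units.ne_zero a
      rcases zmod5_all _ ha with h' | h' | h' | h'
      · exact (sWaring_le_of (by norm_num) (rep1_iff.mpr h')).trans (by norm_num)
      · exact (sWaring_le_of (by norm_num) (rep2_iff.mpr h')).trans (by norm_num)
      · exact (sWaring_le_of (by norm_num) (rep3_iff.mpr h')).trans (by norm_num)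
      · exact sWaring_le_of (by norm_num) (rep4_iff.mpr h')
    · rw [hu.unit_spec]
      refine sWaring_eq_of (by norm_num) (rep4_iff.mpr zmod5_rep4) (fun j hj1 hj2 => ?_)
      have hj : j = 1 ∨ j = 2 ∨ j = 3 := by omega
      rcases hj with rfl | rfl | rfl
      · rw [rep1_iff]; exact zmod5_not1
      · rw [rep2_iff]; exact zmod5_not2
      · rw [rep3_iff]; exact zmod5_not3
  · rw [if_neg h5]
    by_cases h13 : p = 13 ∨ p = 17 ∨ p = 29
    · rw [if_pos h13]
      rcases h13 with rfl | rfl | rfl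
      · exact gWaring_eq_three_of _ zmod13_ne zmod13_all zmod13_not1 zmod13_not2
      · exact gWaring_eq_three_of _ zmod17_ne zmod17_all zmod17_not1 zmod17_not2
      · exact gWaring_eq_three_of _ zmod29_ne zmod29_all zmod29_not1 zmod29_not2
    · rw [if_neg h13]
      by_cases hbig : 61 ≤ p
      · exact gWaring_eq_two_of h4 (fun b hb => Or.inr (two_rep h4 hbig hb))
      · have hmem : p = 37 ∨ p = 41 ∨ p = 53 := by
          push_neg at h13
          obtain ⟨hn13, hn17, hn29⟩ := h13
          have h2 := hp.two_le
          interval_cases p <;> first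
            | (exact absurd hp (by decide)) | omega
        rcases hmem with rfl | rfl | rfl
        · exact gWaring_eq_two_of h4 zmod37_all
        · exact gWaring_eq_two_of h4 zmod41_all
        · exact gWaring_eq_two_of h4 zmod53_all
end
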